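/- arXiv:0902.4098 — 3 statements merged into one kernel-verified Lean document; each statement's English description precedes it below -/
import Mathlib

section
/- The normalized matrix of maximum out-forests J̄ of a weighted digraph Γ is the eigenprojection of its Kirchhoff matrix L at eigenvalue 0: J̄ is idempotent, its range equals ker L, and its kernel equals the range of L. -/
open Finset

variable {n : ℕ}

/-- Kirchhoff (Laplacian) matrix of the weighted digraph whose arc `(j, i)`
has weight `a i j` (so `a i j` is the weight with which agent `i` accounts for `j`). -/
noncomputable def kirchhoff (a : Matrix (Fin n) (Fin n) ℝ) : Matrix (Fin n) (Fin n) ℝ :=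
  Matrix.of fun i j => if i = j then ∑ k ∈ Finset.univ.erase i, a i k else -a i j

/-- `F` is a spanning diverging forest (out-forest) of the digraph with arcs
`u → v` present iff `a v u > 0`: every arc of `F` is an arc of the digraph,
every vertex has in-degree at most one in `F`, and `F` has no directed cycles
(equivalently, no infinite directed walk). -/
def IsOutForest (a : Matrix (Fin n) (Fin n) ℝ) (F : Finset (Fin n × Fin n)) : Prop :=
  (∀ e ∈ F, 0 < a e.2 e.1) ∧
  (∀ u u' v : Fin n, (u, v) ∈ F → (u', v) ∈ F → u = u') ∧
  ¬ ∃ f : ℕ → Fin n, ∀ k, (f k, f (k + 1)) ∈ F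

/-- Number of arcs of a maximum out-forest. -/
noncomputable def maxForestSize (a : Matrix (Fin n) (Fin n) ℝ) : ℕ :=
  sSup {k | ∃ F, IsOutForest a F ∧ F.card = k}

/-- The out-forest dimension: the number of trees in any maximum out-forest. -/
noncomputable def outForestDim (a : Matrix (Fin n) (Fin n) ℝ) : ℕ :=
  n - maxForestSize a

open Classical in
/-- The set of maximum out-forests. -/
noncomputable def maxForests (a : Matrix (Fin n) (Fin n) ℝ) :
    Finset (Finset (Fin n × Fin n)) :=
  Finset.univ.filter fun F => IsOutForest a F ∧ F.card = maxForestSize a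

/-- The weight of a forest: the product of its arc weights. -/
def forestWeight (a : Matrix (Fin n) (Fin n) ℝ) (F : Finset (Fin n × Fin n)) : ℝ :=
  ∏ e ∈ F, a e.2 e.1

/-- In forest `F`, vertex `i` belongs to the tree diverging from (rooted at) `j`. -/
def InTreeRootedAt (F : Finset (Fin n × Fin n)) (j i : Fin n) : Prop :=
  (∀ u, (u, j) ∉ F) ∧ Relation.ReflTransGen (fun x y => (x, y) ∈ F) j i

open Classical in
/-- The normalized matrix of maximum out-forests. -/
noncomputable def barJ (a : Matrix (Fin n) (Fin n) ℝ) : Matrix (Fin n) (Fin n) ℝ :=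
  Matrix.of fun i j =>
    (∑ F ∈ (maxForests a).filter (fun F => InTreeRootedAt F j i), forestWeight a F) /
    (∑ F ∈ maxForests a, forestWeight a F)

/-- Reachability by directed paths (arc `u → v` present iff `a v u > 0`). -/
def Reach (a : Matrix (Fin n) (Fin n) ℝ) (u v : Fin n) : Prop :=
  Relation.ReflTransGen (fun x y => 0 < a y x) u v

/-- The strong component (bicomponent) of vertex `v`. -/
def strongClass (a : Matrix (Fin n) (Fin n) ℝ) (v : Fin n) : Set (Fin n) :=
  {u | Reach a u v ∧ Reach a v u}

/-- The set of strong components. -/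
def strongClasses (a : Matrix (Fin n) (Fin n) ℝ) : Set (Set (Fin n)) :=
  {S | ∃ v, S = strongClass a v}

/-- Basis bicomponents: strong components with no arcs entering from outside. -/
def basisClasses (a : Matrix (Fin n) (Fin n) ℝ) : Set (Set (Fin n)) :=
  {S | (∃ v, S = strongClass a v) ∧ ∀ u v, u ∉ S → v ∈ S → ¬ 0 < a v u}

/-- Weak reachability (underlying undirected graph). -/
def WeakReach (a : Matrix (Fin n) (Fin n) ℝ) (u v : Fin n) : Prop :=
  Relation.ReflTransGen (fun x y => 0 < a y x ∨ 0 < a x y) u v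

/-- The set of weak components. -/
def weakClasses (a : Matrix (Fin n) (Fin n) ℝ) : Set (Set (Fin n)) :=
  {S | ∃ v, S = {u | WeakReach a u v}}

namespace BJ

variable {n : ℕ}

/-- All directed cycles are absent. -/
def NoCycle (F : Finset (Fin n × Fin n)) : Prop :=
  ∀ x : Fin n, ¬ Relation.TransGen (fun u v => (u, v) ∈ F) x x

/-- In-degree at most one. -/
def IndegOne (F : Finset (Fin n × Fin n)) : Prop :=
  ∀ u u' v : Fin n, (u, v) ∈ F → (u', v) ∈ F → u = u'

lemma chain_transGen {α : Type*} {R : α → α → Prop} :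
    ∀ (m : ℕ), 0 < m → ∀ (g : ℕ → α), (∀ t < m, R (g t) (g (t + 1))) →
    Relation.TransGen R (g 0) (g m) := by
  intro m
  induction m with
  | zero => omega
  | succ m ih =>
    intro _ g h
    rcases Nat.eq_zero_or_pos m with rfl | hm'
    · exact .single (h 0 (by omega))
    · exact (ih hm' g (fun t ht => h t (by omega))).tail (h m (by omega))

lemma chain_reflTransGen {α : Type*} {R : α → α → Prop} (m : ℕ) (g : ℕ → α)
    (h : ∀ t < m, R (g t) (g (t + 1))) : Relation.ReflTransGen R (g 0) (g m) := by
  rcases Nat.eq_zero_or_pos m with rfl | hm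
  · exact .refl
  · exact (chain_transGen m hm g h).to_reflTransGen

lemma transGen_chain {α : Type*} {R : α → α → Prop} {x y : α} (h : Relation.TransGen R x y) :
    ∃ (m : ℕ) (g : ℕ → α), 0 < m ∧ g 0 = x ∧ g m = y ∧ ∀ t < m, R (g t) (g (t + 1)) := by
  induction h with
  | @single b hb =>
    refine ⟨1, fun t => if t = 0 then x else b, one_pos, by simp, by simp, ?_⟩
    intro t ht
    have : t = 0 := by omega
    subst this; simpa using hb
  | @tail b c hab hbc ih =>
    obtain ⟨m, g, hm, h0, hmy, harc⟩ := ih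
    refine ⟨m + 1, fun t => if t ≤ m then g t else c, by omega, by simp [h0], by simp, ?_⟩
    intro t ht
    rcases Nat.lt_or_ge t m with h1 | h1
    · simpa [Nat.le_of_lt h1, Nat.succ_le_of_lt h1] using harc t h1
    · have : t = m := by omega
      subst this
      simpa [hmy] using hbc

lemma cycle_of_repeat {F : Finset (Fin n × Fin n)} {f : ℕ → Fin n} (hf : ∀ k, (f k, f (k + 1)) ∈ F)
    {s t : ℕ} (h : s < t) (he : f s = f t) :
    Relation.TransGen (fun u v => (u, v) ∈ F) (f s) (f s) := by
  have this : Relation.TransGen (fun u v => (u, v) ∈ F)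
      ((fun u => f (s + u)) 0) ((fun u => f (s + u)) (t - s)) :=
    chain_transGen (R := fun u v => (u, v) ∈ F) (t - s) (by omega) (fun u => f (s + u))
      (fun u _ => by show (f (s + u), f (s + (u + 1))) ∈ F; rw [← Nat.add_assoc]; exact hf (s + u))
  simp only [Nat.add_zero] at this
  rw [show s + (t - s) = t by omega] at this
  rwa [← he] at this

lemma noCycle_iff_no_walk (F : Finset (Fin n × Fin n)) :
    NoCycle F ↔ ¬ ∃ f : ℕ → Fin n, ∀ k, (f k, f (k + 1)) ∈ F := by
  constructor
  · intro hC ⟨f, hf⟩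
    rcases n.eq_zero_or_pos with rfl | hn
    · exact (f 0).elim0
    obtain ⟨s, t, hst, he⟩ := Finite.exists_ne_map_eq_of_infinite f
    rcases Nat.lt_or_ge s t with h | h
    · exact hC (f s) (cycle_of_repeat hf h he)
    · have h' : t < s := by omega
      exact hC (f t) (cycle_of_repeat hf h' he.symm)
  · intro hW x hx
    obtain ⟨m, g, hm, h0, hmx, harc⟩ := transGen_chain hx
    refine hW ⟨fun k => g (k % m), fun k => ?_⟩
    have hr : k % m < m := Nat.mod_lt _ hm
    show (g (k % m), g ((k + 1) % m)) ∈ F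
    have hk : m * (k / m) + k % m = k := Nat.div_add_mod k m
    have hmod : (k + 1) % m = (k % m + 1) % m := by
      conv_lhs => rw [show k + 1 = m * (k / m) + (k % m + 1) by rw [← Nat.add_assoc, hk]]
      rw [Nat.mul_add_mod]
    rcases Nat.lt_or_ge (k % m + 1) m with h1 | h1
    · have h2 : (k + 1) % m = k % m + 1 := by rw [hmod, Nat.mod_eq_of_lt h1]
      rw [h2]
      exact harc _ hr
    · have h2 : k % m + 1 = m := by omega
      have h3 : (k + 1) % m = 0 := by rw [hmod, h2, Nat.mod_self]
      rw [h3]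
      have := harc (k % m) hr
      rw [h2] at this
      rwa [hmx, ← h0] at this

/-- Parent function of a forest: the tail of the unique in-arc, or the vertex itself. -/
noncomputable def par (F : Finset (Fin n × Fin n)) (v : Fin n) : Fin n :=
  if h : ∃ u, (u, v) ∈ F then h.choose else v

/-- `v` is a root: no in-arcs. -/
def IsRt (F : Finset (Fin n × Fin n)) (v : Fin n) : Prop := ∀ u, (u, v) ∉ F

/-- The root of the tree containing `x`. -/
noncomputable def rt (F : Finset (Fin n × Fin n)) (x : Fin n) : Fin n := (par F)^[n] x

variable {F : Finset (Fin n × Fin n)}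

lemma par_mem (h : ¬ IsRt F v) : (par F v, v) ∈ F := by
  have h' : ∃ u, (u, v) ∈ F := by
    by_contra hc
    exact h (fun u hu => hc ⟨u, hu⟩)
  rw [par, dif_pos h']
  exact h'.choose_spec

lemma par_eq (hU : IndegOne F) {u v : Fin n} (h : (u, v) ∈ F) : par F v = u := by
  have h' : ∃ u, (u, v) ∈ F := ⟨u, h⟩
  rw [par, dif_pos h']
  exact hU _ _ _ h'.choose_spec h

lemma isRt_par (h : IsRt F v) : par F v = v := by
  rw [par, dif_neg]
  rintro ⟨u, hu⟩
  exact h u hu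

lemma no_self_arc (hC : NoCycle F) (v : Fin n) : (v, v) ∉ F :=
  fun h => hC v (.single h)

lemma par_ne_or_root (hU : IndegOne F) (hC : NoCycle F) (v : Fin n) :
    IsRt F v ∨ ((par F v, v) ∈ F ∧ par F v ≠ v) := by
  by_cases h : IsRt F v
  · exact .inl h
  · refine .inr ⟨par_mem h, fun he => ?_⟩
    have hmem := par_mem h
    rw [he] at hmem
    exact no_self_arc hC v hmem

/-- Each iterate of `par` is an ancestor: there is a path down to `x`. -/
lemma rtg_iter (hU : IndegOne F) (x : Fin n) :
    ∀ t, Relation.ReflTransGen (fun u v => (u, v) ∈ F) ((par F)^[t] x) x := by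
  intro t
  induction t with
  | zero => exact .refl
  | succ t ih =>
    rw [Function.iterate_succ_apply']
    by_cases h : IsRt F ((par F)^[t] x)
    · rw [isRt_par h]; exact ih
    · exact .head (par_mem h) ih

/-- No proper `par`-cycles. -/
lemma isRt_of_iterate_eq (hU : IndegOne F) (hC : NoCycle F) {x : Fin n} {m : ℕ}
    (hm : 0 < m) (h : (par F)^[m] x = x) : IsRt F x := by
  by_contra hx
  -- all iterates are non-roots
  have hper : ∀ c, (par F)^[m * c] x = x := by
    intro c
    induction c with
    | zero => simp
    | succ c ih => rw [Nat.mul_succ, Function.iterate_add_apply, h, ih]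
  have hall : ∀ t, ¬ IsRt F ((par F)^[t] x) := by
    intro t hroot
    have hfix : ∀ s, (par F)^[t + s] x = (par F)^[t] x := by
      intro s
      induction s with
      | zero => rfl
      | succ s ih => rw [← Nat.add_assoc, Function.iterate_succ_apply', ih, isRt_par hroot]
    have : (par F)^[m * (t + 1)] x = (par F)^[t] x := by
      rw [show m * (t + 1) = t + (m * (t + 1) - t) by have := Nat.le_mul_of_pos_left (t+1) hm; omega]
      exact hfix _
    rw [hper (t + 1)] at this
    exact hx (this ▸ hroot)
  -- build a cycle
  have harc : ∀ t, ((par F)^[t + 1] x, (par F)^[t] x) ∈ F := by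
    intro t
    rw [Function.iterate_succ_apply']
    exact par_mem (hall t)
  refine hC x ?_
  have key : Relation.TransGen (fun u v => (u, v) ∈ F)
      ((fun t => (par F)^[m - t] x) 0) ((fun t => (par F)^[m - t] x) m) :=
    chain_transGen (R := fun u v => (u, v) ∈ F) m hm _ (fun t ht => by
      show ((par F)^[m - t] x, (par F)^[m - (t + 1)] x) ∈ F
      rw [show m - t = (m - (t + 1)) + 1 by omega]
      exact harc _)
  simp only [Nat.sub_zero, Nat.sub_self] at key
  rwa [h] at key

lemma isRt_rt (hU : IndegOne F) (hC : NoCycle F) (x : Fin n) : IsRt F (rt F x) := by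
  have hcard : Fintype.card (Fin n) < Fintype.card (Fin (n + 1)) := by simp
  obtain ⟨s, t, hst, he⟩ := Fintype.exists_ne_map_eq_of_card_lt
    (fun t : Fin (n + 1) => (par F)^[(t : ℕ)] x) hcard
  wlog h : (s : ℕ) < (t : ℕ) generalizing s t
  · exact this t s hst.symm he.symm (by have := Fin.val_ne_of_ne hst; omega)
  have hroot : IsRt F ((par F)^[(s : ℕ)] x) := by
    apply isRt_of_iterate_eq hU hC (m := (t : ℕ) - (s : ℕ)) (by omega)
    rw [← Function.iterate_add_apply, show (t:ℕ) - (s:ℕ) + (s:ℕ) = (t:ℕ) by omega]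
    exact he.symm
  have ht := t.is_lt
  have : rt F x = (par F)^[(s : ℕ)] x := by
    have h1 : rt F x = (par F)^[(n - (s:ℕ)) + (s:ℕ)] x := by
      rw [rt]; congr 1; omega
    rw [h1, Function.iterate_add_apply]
    exact Function.iterate_fixed (isRt_par hroot) _
  rw [this]
  exact hroot

lemma rt_par (hU : IndegOne F) (hC : NoCycle F) (x : Fin n) : rt F (par F x) = rt F x := by
  have h1 : rt F (par F x) = (par F)^[n + 1] x := by
    rw [rt, ← Function.iterate_succ_apply]
  rw [h1, Function.iterate_succ_apply', ← rt, isRt_par (isRt_rt hU hC x)]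

lemma rt_eq_self (h : IsRt F x) : rt F x = x := Function.iterate_fixed (isRt_par h) n

lemma rt_iterate (hU : IndegOne F) (hC : NoCycle F) (x : Fin n) (t : ℕ) :
    rt F ((par F)^[t] x) = rt F x := by
  induction t with
  | zero => rfl
  | succ t ih => rw [Function.iterate_succ_apply', rt_par hU hC, ih]

lemma rtg_rt (hU : IndegOne F) (x : Fin n) :
    Relation.ReflTransGen (fun u v => (u, v) ∈ F) (rt F x) x := rtg_iter hU x n

lemma rt_eq_of_rtg (hU : IndegOne F) (hC : NoCycle F) {x y : Fin n}
    (h : Relation.ReflTransGen (fun u v => (u, v) ∈ F) x y) : rt F y = rt F x := by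
  induction h with
  | refl => rfl
  | @tail b c hxy hstep ih =>
    rw [← ih, ← rt_par hU hC c, par_eq hU hstep]

lemma exists_iterate_of_rtg (hU : IndegOne F) {x y : Fin n}
    (h : Relation.ReflTransGen (fun u v => (u, v) ∈ F) x y) :
    ∃ t, (par F)^[t] y = x := by
  induction h with
  | refl => exact ⟨0, rfl⟩
  | tail hxy hstep ih =>
    obtain ⟨t, ht⟩ := ih
    exact ⟨t + 1, by rw [Function.iterate_succ_apply, par_eq hU hstep, ht]⟩

lemma rtg_into_root (hR : IsRt F y) (h : Relation.ReflTransGen (fun u v => (u, v) ∈ F) x y) :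
    x = y := by
  rcases (Relation.reflTransGen_iff_eq_or_transGen.mp h) with h' | h'
  · exact h'.symm
  · obtain ⟨b, _, hb⟩ := Relation.TransGen.tail'_iff.mp h'
    exact absurd hb (hR b)

/-- Characterization of `InTreeRootedAt` via the root function. -/
lemma inTree_iff (hU : IndegOne F) (hC : NoCycle F) (j i : Fin n) :
    InTreeRootedAt F j i ↔ rt F i = j := by
  constructor
  · rintro ⟨hroot, hrtg⟩
    rw [rt_eq_of_rtg hU hC hrtg, rt_eq_self hroot]
  · rintro rfl
    exact ⟨isRt_rt hU hC i, rtg_rt hU i⟩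

/-! ### Transfer of parent chains between forests that agree near a chain -/

lemma par_eq_par {F F' : Finset (Fin n × Fin n)} (hU : IndegOne F) (hU' : IndegOne F')
    {v : Fin n} (h : ∀ u, (u, v) ∈ F ↔ (u, v) ∈ F') : par F v = par F' v := by
  by_cases hr : IsRt F v
  · have hr' : IsRt F' v := fun u hu => hr u ((h u).mpr hu)
    rw [isRt_par hr, isRt_par hr']
  · have := par_mem hr
    exact (par_eq hU' ((h _).mp this)).symm

lemma iterate_transfer {F F' : Finset (Fin n × Fin n)} (hU : IndegOne F) (hU' : IndegOne F')
    {x : Fin n} {T : ℕ}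
    (hV : ∀ s < T, ∀ u, (u, (par F)^[s] x) ∈ F ↔ (u, (par F)^[s] x) ∈ F') :
    ∀ s ≤ T, (par F')^[s] x = (par F)^[s] x := by
  intro s hs
  induction s with
  | zero => rfl
  | succ s ih =>
    rw [Function.iterate_succ_apply', Function.iterate_succ_apply',
      ih (by omega), par_eq_par hU hU' (hV s (by omega))]

lemma rt_transfer {F F' : Finset (Fin n × Fin n)} (hU : IndegOne F) (hU' : IndegOne F')
    {x : Fin n}
    (hV : ∀ s, ∀ u, (u, (par F)^[s] x) ∈ F ↔ (u, (par F)^[s] x) ∈ F') :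
    rt F' x = rt F x := by
  rw [rt, rt]
  exact iterate_transfer hU hU' (fun s _ => hV s) n le_rfl

/-! ### Basic facts about out-forests and maximum out-forests -/

lemma isOutForest_iff {a : Matrix (Fin n) (Fin n) ℝ} {F : Finset (Fin n × Fin n)} :
    IsOutForest a F ↔ (∀ e ∈ F, 0 < a e.2 e.1) ∧ IndegOne F ∧ NoCycle F := by
  rw [IsOutForest, IndegOne, ← noCycle_iff_no_walk]

lemma isOutForest_empty (a : Matrix (Fin n) (Fin n) ℝ) : IsOutForest a (∅ : Finset (Fin n × Fin n)) := by
  rw [isOutForest_iff]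
  exact ⟨by simp, fun u u' v h => by simp at h, fun x hx => by
    obtain ⟨m, g, hm, _, _, harc⟩ := transGen_chain hx
    simpa using harc 0 hm⟩

lemma card_le_maxForestSize {a : Matrix (Fin n) (Fin n) ℝ} {F : Finset (Fin n × Fin n)}
    (h : IsOutForest a F) : F.card ≤ maxForestSize a := by
  apply le_csSup
  · refine ⟨Fintype.card (Fin n × Fin n), ?_⟩
    rintro k ⟨G, _, rfl⟩
    exact G.card_le_univ.trans (by simp)
  · exact ⟨F, h, rfl⟩

lemma exists_maxForest (a : Matrix (Fin n) (Fin n) ℝ) :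
    ∃ F, IsOutForest a F ∧ F.card = maxForestSize a := by
  have h : maxForestSize a ∈ {k | ∃ F, IsOutForest a F ∧ F.card = k} := by
    apply Nat.sSup_mem
    · exact ⟨0, ∅, isOutForest_empty a, by simp⟩
    · refine ⟨Fintype.card (Fin n × Fin n), ?_⟩
      rintro k ⟨G, _, rfl⟩
      exact G.card_le_univ.trans (by simp)
  exact h

open Classical in
lemma mem_maxForests {a : Matrix (Fin n) (Fin n) ℝ} {F : Finset (Fin n × Fin n)} :
    F ∈ maxForests a ↔ IsOutForest a F ∧ F.card = maxForestSize a := by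
  rw [maxForests, Finset.mem_filter]
  simp

lemma forestWeight_pos {a : Matrix (Fin n) (Fin n) ℝ} {F : Finset (Fin n × Fin n)}
    (h : IsOutForest a F) : 0 < forestWeight a F :=
  Finset.prod_pos (fun e he => h.1 e he)

lemma maxForests_nonempty (a : Matrix (Fin n) (Fin n) ℝ) : (maxForests a).Nonempty := by
  obtain ⟨F, h1, h2⟩ := exists_maxForest a
  exact ⟨F, mem_maxForests.mpr ⟨h1, h2⟩⟩

lemma denom_pos (a : Matrix (Fin n) (Fin n) ℝ) :
    0 < ∑ F ∈ maxForests a, forestWeight a F :=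
  Finset.sum_pos (fun F hF => forestWeight_pos (mem_maxForests.mp hF).1) (maxForests_nonempty a)

/-! ### Inserting arcs, cycles, and maximality -/

lemma noCycle_subset {F G : Finset (Fin n × Fin n)} (h : F ⊆ G) (hG : NoCycle G) : NoCycle F :=
  fun x hx => hG x (Relation.TransGen.mono (fun u v huv => h huv) _ _ hx)

/-- cutting lemma: a path from `v` to `u` in `F ∪ {(u,v)}` yields one in `F`. -/
lemma rtg_cut {F : Finset (Fin n × Fin n)} {u v : Fin n} :
    ∀ (m : ℕ) (g : ℕ → Fin n), g 0 = v → g m = u →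
      (∀ t < m, (g t, g (t + 1)) ∈ insert (u, v) F) →
      Relation.ReflTransGen (fun x y => (x, y) ∈ F) v u := by
  intro m
  induction m using Nat.strong_induction_on with
  | _ m ih =>
    intro g h0 hm harc
    by_cases he : ∃ t < m, (g t, g (t + 1)) = (u, v)
    · obtain ⟨t, ht, hte⟩ := he
      have h1 : g (t + 1) = v := congrArg Prod.snd hte
      refine ih (m - (t + 1)) (by omega) (fun s => g (t + 1 + s)) (by simpa using h1) ?_ ?_
      · show g (t + 1 + (m - (t + 1))) = u
        rw [show t + 1 + (m - (t + 1)) = m by omega]; exact hm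
      · intro s hs
        show (g (t + 1 + s), g (t + 1 + (s + 1))) ∈ insert (u, v) F
        exact harc (t + 1 + s) (by omega)
    · push_neg at he
      have harc' : ∀ t < m, (g t, g (t + 1)) ∈ F := by
        intro t ht
        rcases Finset.mem_insert.mp (harc t ht) with h' | h'
        · exact absurd h' (he t ht)
        · exact h'
      rw [← h0, ← hm]
      exact chain_reflTransGen m g harc'

lemma noCycle_insert {F : Finset (Fin n × Fin n)} (hC : NoCycle F) {u v : Fin n}
    (h : ¬ Relation.ReflTransGen (fun x y => (x, y) ∈ F) v u) :
    NoCycle (insert (u, v) F) := by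
  intro x hx
  obtain ⟨m, g, hm, h0, hmx, harc⟩ := transGen_chain hx
  by_cases he : ∃ t < m, (g t, g (t + 1)) = (u, v)
  · -- rotate the cycle so that it goes from v around to u
    obtain ⟨t, ht, hte⟩ := he
    have hgt : g t = u := congrArg Prod.fst hte
    have hgt1 : g (t + 1) = v := congrArg Prod.snd hte
    apply h
    refine rtg_cut (m - 1) (fun s => if t + 1 + s ≤ m then g (t + 1 + s) else g (t + 1 + s - m))
      ?_ ?_ ?_
    · show (if t + 1 + 0 ≤ m then g (t + 1 + 0) else g (t + 1 + 0 - m)) = v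
      rw [if_pos (by omega)]
      exact hgt1
    · show (if t + 1 + (m - 1) ≤ m then g (t + 1 + (m - 1)) else g (t + 1 + (m - 1) - m)) = u
      by_cases h1 : t + 1 + (m - 1) ≤ m
      · have h2 : t = 0 := by omega
        subst h2
        rw [if_pos h1, show 0 + 1 + (m - 1) = m by omega, hmx, ← h0]
        exact hgt
      · rw [if_neg h1, show t + 1 + (m - 1) - m = t by omega]
        exact hgt
    · intro s hs
      show ((if t + 1 + s ≤ m then g (t + 1 + s) else g (t + 1 + s - m)),
        (if t + 1 + (s + 1) ≤ m then g (t + 1 + (s + 1)) else g (t + 1 + (s + 1) - m))) ∈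
        insert (u, v) F
      by_cases h1 : t + 1 + (s + 1) ≤ m
      · rw [if_pos (by omega : t + 1 + s ≤ m), if_pos h1]
        exact harc (t + 1 + s) (by omega)
      · by_cases h2 : t + 1 + s ≤ m
        · have h3 : t + 1 + s = m := by omega
          rw [if_pos h2, if_neg h1, show t + 1 + (s + 1) - m = 1 by omega, h3, hmx, ← h0]
          exact harc 0 hm
        · rw [if_neg h2, if_neg h1, show t + 1 + (s + 1) - m = (t + 1 + s - m) + 1 by omega]
          exact harc _ (by omega)
  · push_neg at he
    refine hC x ?_
    have harc' : ∀ t < m, (g t, g (t + 1)) ∈ F := fun t ht =>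
      ((Finset.mem_insert.mp (harc t ht)).resolve_left (he t ht))
    have key := chain_transGen (R := fun p q => (p, q) ∈ F) m hm g harc'
    rwa [h0, hmx] at key


/-- In a maximum out-forest, an arc of the digraph entering a root must come
from the root's own tree. -/
lemma reach_of_root_arc {a : Matrix (Fin n) (Fin n) ℝ} {F : Finset (Fin n × Fin n)}
    (hF : F ∈ maxForests a) {u v : Fin n} (hroot : IsRt F v) (harc : 0 < a v u)
    (hne : u ≠ v) : Relation.ReflTransGen (fun x y => (x, y) ∈ F) v u := by
  obtain ⟨hFf, hFc⟩ := mem_maxForests.mp hF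
  obtain ⟨hpos, hU, hC⟩ := isOutForest_iff.mp hFf
  by_contra hrtg
  have hforest : IsOutForest a (insert (u, v) F) := by
    rw [isOutForest_iff]
    refine ⟨?_, ?_, noCycle_insert hC hrtg⟩
    · intro e he
      rcases Finset.mem_insert.mp he with rfl | h
      · exact harc
      · exact hpos e h
    · intro w w' z h1 h2
      rcases Finset.mem_insert.mp h1 with h1 | h1 <;> rcases Finset.mem_insert.mp h2 with h2 | h2
      · rw [Prod.mk.injEq] at h1 h2; omega
      · rw [Prod.mk.injEq] at h1; exact absurd h2 (h1.2 ▸ hroot w')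
      · rw [Prod.mk.injEq] at h2; exact absurd h1 (h2.2 ▸ hroot w)
      · exact hU w w' z h1 h2
  have hcard := card_le_maxForestSize hforest
  rw [Finset.card_insert_of_notMem (hroot u), hFc] at hcard
  omega

section InvolutionC

variable {a : Matrix (Fin n) (Fin n) ℝ}

/-- All the data for the swap used to prove `L * J̄ = 0`. -/
lemma goodC_spec {i k : Fin n} {F : Finset (Fin n × Fin n)} (hk : k ≠ i)
    (hF : F ∈ maxForests a) (hak : 0 < a i k)
    (hdiff : rt F i ≠ rt F k) :
    (par F i, i) ∈ F ∧ par F i ≠ i ∧ (k, i) ∉ F ∧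
    insert (k, i) (F.erase (par F i, i)) ∈ maxForests a ∧
    rt (insert (k, i) (F.erase (par F i, i))) i = rt F k ∧
    rt (insert (k, i) (F.erase (par F i, i))) (par F i) = rt F i ∧
    par (insert (k, i) (F.erase (par F i, i))) i = k := by
  obtain ⟨hFf, hFc⟩ := mem_maxForests.mp hF
  obtain ⟨hpos, hU, hC⟩ := isOutForest_iff.mp hFf
  have hnr : ¬ Relation.ReflTransGen (fun x y => (x, y) ∈ F) i k :=
    fun h => hdiff (rt_eq_of_rtg hU hC h).symm
  have hiroot : ¬ IsRt F i := fun hr => hnr (reach_of_root_arc hF hr hak hk)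
  have hpi : (par F i, i) ∈ F := par_mem hiroot
  have hpne : par F i ≠ i := by
    intro h
    have := hpi
    rw [h] at this
    exact no_self_arc hC i this
  have hki : (k, i) ∉ F := by
    intro hmem
    have hpk : par F i = k := par_eq hU hmem
    exact hdiff (hpk ▸ (rt_par hU hC i).symm)
  set F' := insert (k, i) (F.erase (par F i, i)) with hF'def
  have hmem' : ∀ u v : Fin n,
      ((u, v) ∈ F' ↔ ((u, v) = (k, i) ∨ ((u, v) ∈ F ∧ (u, v) ≠ (par F i, i)))) := by
    intro u v
    rw [hF'def, Finset.mem_insert, Finset.mem_erase]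
    tauto
  have hsame : ∀ v u : Fin n, v ≠ i → ((u, v) ∈ F ↔ (u, v) ∈ F') := by
    intro v u hv
    rw [hmem']
    constructor
    · intro h
      exact .inr ⟨h, fun hh => hv (congrArg Prod.snd hh)⟩
    · rintro (h | ⟨h, _⟩)
      · exact absurd (congrArg Prod.snd h) hv
      · exact h
  have hU' : IndegOne F' := by
    intro u u' v h1 h2
    rw [hmem'] at h1 h2
    rcases h1 with h1 | ⟨h1, h1'⟩ <;> rcases h2 with h2 | ⟨h2, h2'⟩
    · rw [Prod.mk.injEq] at h1 h2
      rw [h1.1, h2.1]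
    · rw [Prod.mk.injEq] at h1
      exact absurd (hU _ _ _ h2 (h1.2 ▸ hpi)) (by rw [← h1.2] at h2'; simpa [Prod.ext_iff] using h2')
    · rw [Prod.mk.injEq] at h2
      exact absurd (hU _ _ _ h1 (h2.2 ▸ hpi)) (by rw [← h2.2] at h1'; simpa [Prod.ext_iff] using h1')
    · exact hU _ _ _ h1 h2
  have hC' : NoCycle F' := by
    apply noCycle_insert (noCycle_subset (Finset.erase_subset _ _) hC)
    intro hp
    exact hnr (Relation.ReflTransGen.mono (fun u v h => Finset.mem_of_mem_erase h) _ _ hp)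
  have hpos' : ∀ e ∈ F', 0 < a e.2 e.1 := by
    intro e he
    rcases Finset.mem_insert.mp he with rfl | h
    · exact hak
    · exact hpos e (Finset.mem_of_mem_erase h)
  have hcard' : F'.card = maxForestSize a := by
    rw [hF'def, Finset.card_insert_of_notMem (fun h => hki (Finset.mem_of_mem_erase h)),
      Finset.card_erase_of_mem hpi]
    have : 0 < F.card := Finset.card_pos.mpr ⟨_, hpi⟩
    omega
  have hF'M : F' ∈ maxForests a := mem_maxForests.mpr ⟨isOutForest_iff.mpr ⟨hpos', hU', hC'⟩, hcard'⟩
  have hpar'i : par F' i = k := par_eq hU' (by rw [hmem']; exact .inl rfl)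
  have hrtk : rt F' k = rt F k := by
    apply rt_transfer hU hU'
    intro s u
    apply hsame
    intro hiter
    exact hnr (hiter ▸ rtg_iter hU k s)
  have hrti : rt F' i = rt F k := by
    rw [← rt_par hU' hC' i, hpar'i, hrtk]
  have hrtp : rt F' (par F i) = rt F i := by
    rw [← rt_par hU hC i]
    apply rt_transfer hU hU'
    intro s u
    apply hsame
    intro hiter
    have h1 := rtg_iter hU (par F i) s
    rw [hiter] at h1
    exact hC i (Relation.TransGen.tail' h1 hpi)
  exact ⟨hpi, hpne, hki, hF'M, hrti, hrtp, hpar'i⟩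

end InvolutionC

section SumC

variable {a : Matrix (Fin n) (Fin n) ℝ}

open Classical in
lemma sumC (hnn : ∀ i j, 0 ≤ a i j) (i j : Fin n) :
    ∑ x ∈ (Finset.univ.erase i) ×ˢ maxForests a,
      (a i x.1 * forestWeight a x.2 *
        ((if rt x.2 i = j then (1:ℝ) else 0) - (if rt x.2 x.1 = j then 1 else 0))) = 0 := by
  refine Finset.sum_involution
    (fun x hx => if h : (0 < a i x.1 ∧ ¬((rt x.2 i = j) ↔ (rt x.2 x.1 = j)))
      then (par x.2 i, insert (x.1, i) (x.2.erase (par x.2 i, i))) else x)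
    ?_ ?_ ?_ ?_
  · -- sums to zero
    rintro ⟨k, F⟩ hx
    obtain ⟨hk, hFM⟩ := Finset.mem_product.mp hx
    have hki' : k ≠ i := (Finset.mem_erase.mp hk).1
    dsimp only
    by_cases h : (0 < a i k ∧ ¬((rt F i = j) ↔ (rt F k = j)))
    · rw [dif_pos h]
      have hdiff : rt F i ≠ rt F k := fun he => h.2 (by rw [he])
      obtain ⟨hpi, hpne, hkiF, hF'M, hrti, hrtp, hpar'i⟩ := goodC_spec hki' hFM h.1 hdiff
      have hwF : forestWeight a F = a i (par F i) * forestWeight a (F.erase (par F i, i)) := by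
        rw [forestWeight, ← Finset.mul_prod_erase F _ hpi]
        rfl
      have hwF' : forestWeight a (insert (k, i) (F.erase (par F i, i)))
          = a i k * forestWeight a (F.erase (par F i, i)) := by
        rw [forestWeight, Finset.prod_insert (fun hc => hkiF (Finset.mem_of_mem_erase hc))]
        rfl
      simp only [hrti, hrtp, hwF', hwF]
      ring
    · rw [dif_neg h]
      have hzero : a i k * forestWeight a F *
          ((if rt F i = j then (1:ℝ) else 0) - (if rt F k = j then 1 else 0)) = 0 := by
        push_neg at h
        rcases (hnn i k).eq_or_lt with hz | hp
        · rw [← hz]; ring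
        · have hiff := h hp
          by_cases hcase : rt F i = j
          · rw [if_pos hcase, if_pos (hiff.mp hcase)]; ring
          · rw [if_neg hcase, if_neg (fun hc => hcase (hiff.mpr hc))]; ring
      rw [hzero]
      ring
  · -- nonzero terms move
    rintro ⟨k, F⟩ hx hne
    obtain ⟨hk, hFM⟩ := Finset.mem_product.mp hx
    have hki' : k ≠ i := (Finset.mem_erase.mp hk).1
    dsimp only
    have h : (0 < a i k ∧ ¬((rt F i = j) ↔ (rt F k = j))) := by
      constructor
      · rcases (hnn i k).eq_or_lt with hz | hp
        · exfalso; apply hne; rw [← hz]; ring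
        · exact hp
      · intro hiff
        apply hne
        by_cases hcase : rt F i = j
        · rw [if_pos hcase, if_pos (hiff.mp hcase)]; ring
        · rw [if_neg hcase, if_neg (fun hc => hcase (hiff.mpr hc))]; ring
    rw [dif_pos h]
    have hdiff : rt F i ≠ rt F k := fun he => h.2 (by rw [he])
    obtain ⟨hpi, hpne, hkiF, hF'M, hrti, hrtp, hpar'i⟩ := goodC_spec hki' hFM h.1 hdiff
    intro hc
    have : insert (k, i) (F.erase (par F i, i)) = F := congrArg Prod.snd hc
    rw [← this] at hkiF
    exact hkiF (Finset.mem_insert_self _ _)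
  · -- maps into the set
    rintro ⟨k, F⟩ hx
    obtain ⟨hk, hFM⟩ := Finset.mem_product.mp hx
    have hki' : k ≠ i := (Finset.mem_erase.mp hk).1
    dsimp only
    by_cases h : (0 < a i k ∧ ¬((rt F i = j) ↔ (rt F k = j)))
    · rw [dif_pos h]
      have hdiff : rt F i ≠ rt F k := fun he => h.2 (by rw [he])
      obtain ⟨hpi, hpne, hkiF, hF'M, hrti, hrtp, hpar'i⟩ := goodC_spec hki' hFM h.1 hdiff
      exact Finset.mem_product.mpr ⟨Finset.mem_erase.mpr ⟨hpne, Finset.mem_univ _⟩, hF'M⟩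
    · rw [dif_neg h]; exact hx
  · -- involution
    rintro ⟨k, F⟩ hx
    obtain ⟨hk, hFM⟩ := Finset.mem_product.mp hx
    have hki' : k ≠ i := (Finset.mem_erase.mp hk).1
    dsimp only
    by_cases h : (0 < a i k ∧ ¬((rt F i = j) ↔ (rt F k = j)))
    · simp only [dif_pos h]
      have hdiff : rt F i ≠ rt F k := fun he => h.2 (by rw [he])
      obtain ⟨hpi, hpne, hkiF, hF'M, hrti, hrtp, hpar'i⟩ := goodC_spec hki' hFM h.1 hdiff
      have hpos' : 0 < a i (par F i) := (mem_maxForests.mp hFM).1.1 (par F i, i) hpi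
      have hcond : (0 < a i (par F i) ∧
          ¬((rt (insert (k, i) (F.erase (par F i, i))) i = j) ↔
            (rt (insert (k, i) (F.erase (par F i, i))) (par F i) = j))) := by
        refine ⟨hpos', ?_⟩
        rw [hrti, hrtp]
        intro hiff
        exact h.2 hiff.symm
      rw [dif_pos hcond]
      have he1 : (insert (k, i) (F.erase (par F i, i))).erase (k, i) = F.erase (par F i, i) :=
        Finset.erase_insert (fun hc => hkiF (Finset.mem_of_mem_erase hc))
      rw [Prod.mk.injEq]
      constructor
      · exact hpar'i
      · rw [hpar'i, he1, Finset.insert_erase hpi]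
    · simp only [dif_neg h]
  
end SumC

section MatrixC

variable {a : Matrix (Fin n) (Fin n) ℝ}

lemma barJ_apply (a : Matrix (Fin n) (Fin n) ℝ) (i j : Fin n) :
    barJ a i j = (∑ F ∈ maxForests a, (if rt F i = j then (1:ℝ) else 0) * forestWeight a F) /
      (∑ F ∈ maxForests a, forestWeight a F) := by
  classical
  rw [barJ]
  show (∑ F ∈ (maxForests a).filter (fun F => InTreeRootedAt F j i), forestWeight a F) / _ = _
  congr 1
  rw [Finset.sum_filter]
  refine Finset.sum_congr rfl (fun F hF => ?_)
  obtain ⟨hFf, _⟩ := mem_maxForests.mp hF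
  obtain ⟨_, hU, hC⟩ := isOutForest_iff.mp hFf
  by_cases hcase : rt F i = j
  · rw [if_pos ((inTree_iff hU hC j i).mpr hcase), if_pos hcase, one_mul]
  · rw [if_neg (fun hc => hcase ((inTree_iff hU hC j i).mp hc)), if_neg hcase, zero_mul]

lemma kirchhoff_entry_diag (a : Matrix (Fin n) (Fin n) ℝ) (i : Fin n) :
    kirchhoff a i i = ∑ k ∈ Finset.univ.erase i, a i k := by
  rw [kirchhoff, Matrix.of_apply, if_pos rfl]

lemma kirchhoff_entry_off (a : Matrix (Fin n) (Fin n) ℝ) {i k : Fin n} (h : k ≠ i) :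
    kirchhoff a i k = -a i k := by
  rw [kirchhoff, Matrix.of_apply, if_neg (fun hc => h hc.symm)]

lemma kirchhoff_mul_barJ (hnn : ∀ i j, 0 ≤ a i j) : kirchhoff a * barJ a = 0 := by
  classical
  ext i j
  rw [Matrix.mul_apply, Matrix.zero_apply]
  set M := maxForests a with hM
  set N : Fin n → ℝ := fun k => ∑ F ∈ M, (if rt F k = j then (1:ℝ) else 0) * forestWeight a F
    with hN
  have hbar : ∀ k, barJ a k j = N k / (∑ F ∈ M, forestWeight a F) := fun k => barJ_apply a k j
  have h1 : ∀ k, kirchhoff a i k * barJ a k j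
      = (kirchhoff a i k * N k) / (∑ F ∈ M, forestWeight a F) := by
    intro k
    rw [hbar k, mul_div_assoc]
  rw [Finset.sum_congr rfl (fun k _ => h1 k), ← Finset.sum_div]
  have key : ∑ k, kirchhoff a i k * N k = 0 := by
    have step1 : ∑ k, kirchhoff a i k * N k
        = (∑ k ∈ Finset.univ.erase i, a i k * N i)
          + ∑ k ∈ Finset.univ.erase i, (-(a i k * N k)) := by
      rw [← Finset.add_sum_erase _ (fun k => kirchhoff a i k * N k) (Finset.mem_univ i),
        kirchhoff_entry_diag, Finset.sum_mul]
      congr 1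
      refine Finset.sum_congr rfl (fun k hk => ?_)
      rw [kirchhoff_entry_off a (Finset.mem_erase.mp hk).1, neg_mul]
    rw [step1, ← Finset.sum_add_distrib]
    have step2 : ∀ k ∈ Finset.univ.erase i, a i k * N i + -(a i k * N k)
        = ∑ F ∈ M, (a i k * forestWeight a F *
            ((if rt F i = j then (1:ℝ) else 0) - (if rt F k = j then 1 else 0))) := by
      intro k _
      have hterm : ∀ F ∈ M, a i k * forestWeight a F *
            ((if rt F i = j then (1:ℝ) else 0) - (if rt F k = j then 1 else 0))
          = a i k * ((if rt F i = j then (1:ℝ) else 0) * forestWeight a F)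
            - a i k * ((if rt F k = j then (1:ℝ) else 0) * forestWeight a F) := fun F _ => by
        ring
      rw [Finset.sum_congr rfl hterm, Finset.sum_sub_distrib, ← Finset.mul_sum, ← Finset.mul_sum]
      rw [hN]
      ring
    rw [Finset.sum_congr rfl step2, ← Finset.sum_product']
    exact sumC hnn i j
  rw [key, zero_div]

end MatrixC

section InvolutionD

variable {a : Matrix (Fin n) (Fin n) ℝ}

lemma indegOne_subset {F G : Finset (Fin n × Fin n)} (h : F ⊆ G) (hG : IndegOne G) :
    IndegOne F := fun u u' v h1 h2 => hG u u' v (h h1) (h h2)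

lemma goodDplus_ex {i j m : Fin n} {F : Finset (Fin n × Fin n)} (hm : m ≠ j)
    (hF : F ∈ maxForests a) (ham : 0 < a j m) (hrt : rt F i = j) :
    ∃ t, (par F)^[t] m = j := by
  obtain ⟨hFf, hFc⟩ := mem_maxForests.mp hF
  obtain ⟨hpos, hU, hC⟩ := isOutForest_iff.mp hFf
  have hjroot : IsRt F j := by rw [← hrt]; exact isRt_rt hU hC i
  exact exists_iterate_of_rtg hU (reach_of_root_arc hF hjroot ham hm)

lemma goodDplus_spec {i j m : Fin n} {F : Finset (Fin n × Fin n)} (hm : m ≠ j)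
    (hF : F ∈ maxForests a) (ham : 0 < a j m) (hrt : rt F i = j)
    (hex : ∃ t, (par F)^[t] m = j) :
    (j, (par F)^[Nat.find hex - 1] m) ∈ F ∧
    (par F)^[Nat.find hex - 1] m ≠ j ∧
    (m, j) ∉ F ∧
    insert (m, j) (F.erase (j, (par F)^[Nat.find hex - 1] m)) ∈ maxForests a ∧
    rt (insert (m, j) (F.erase (j, (par F)^[Nat.find hex - 1] m))) i
      = (par F)^[Nat.find hex - 1] m ∧
    par (insert (m, j) (F.erase (j, (par F)^[Nat.find hex - 1] m))) j = m ∧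
    0 < a ((par F)^[Nat.find hex - 1] m) j := by
  obtain ⟨hFf, hFc⟩ := mem_maxForests.mp hF
  obtain ⟨hpos, hU, hC⟩ := isOutForest_iff.mp hFf
  have hjroot : IsRt F j := by rw [← hrt]; exact isRt_rt hU hC i
  set t₀ := Nat.find hex with ht₀def
  have ht₀ : (par F)^[t₀] m = j := Nat.find_spec hex
  have hmin : ∀ t < t₀, (par F)^[t] m ≠ j := fun t ht => Nat.find_min hex ht
  have ht₀pos : 0 < t₀ := by
    rcases Nat.eq_zero_or_pos t₀ with h0 | h0
    · exact absurd (by rw [← ht₀, h0]; rfl) hm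
    · exact h0
  set K := (par F)^[t₀ - 1] m with hKdef
  have hparK : par F K = j := by
    rw [hKdef,
      show par F ((par F)^[t₀ - 1] m) = (par F)^[t₀ - 1 + 1] m from
        (Function.iterate_succ_apply' _ _ _).symm,
      show t₀ - 1 + 1 = t₀ by omega, ht₀]
  have hKj : K ≠ j := fun hc => hmin (t₀ - 1) (by omega) (hKdef ▸ hc)
  have hKnotroot : ¬ IsRt F K := fun hr => hKj (by rw [← hparK, isRt_par hr])
  have hjK : (j, K) ∈ F := by
    have := par_mem hKnotroot
    rwa [hparK] at this
  have haKj : 0 < a K j := hpos (j, K) hjK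
  have hchain_ne : ∀ s < t₀ - 1, (par F)^[s] m ≠ j ∧ (par F)^[s] m ≠ K := by
    intro s hs
    refine ⟨hmin s (by omega), fun hc => ?_⟩
    have : (par F)^[s + 1] m = j := by
      rw [Function.iterate_succ_apply', hc, hparK]
    exact hmin (s + 1) (by omega) this
  have hmj : (m, j) ∉ F := hjroot m
  set F' := insert (m, j) (F.erase (j, K)) with hF'def
  have hmem' : ∀ u v : Fin n,
      ((u, v) ∈ F' ↔ ((u, v) = (m, j) ∨ ((u, v) ∈ F ∧ (u, v) ≠ (j, K)))) := by
    intro u v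
    rw [hF'def, Finset.mem_insert, Finset.mem_erase]
    tauto
  have hsame : ∀ v u : Fin n, v ≠ j → v ≠ K → ((u, v) ∈ F ↔ (u, v) ∈ F') := by
    intro v u hvj hvK
    rw [hmem']
    constructor
    · intro h
      exact .inr ⟨h, fun hh => hvK (congrArg Prod.snd hh)⟩
    · rintro (h | ⟨h, _⟩)
      · exact absurd (congrArg Prod.snd h) hvj
      · exact h
  have hU' : IndegOne F' := by
    intro u u' v h1 h2
    rw [hmem'] at h1 h2
    rcases h1 with h1 | ⟨h1, h1'⟩ <;> rcases h2 with h2 | ⟨h2, h2'⟩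
    · rw [Prod.mk.injEq] at h1 h2
      rw [h1.1, h2.1]
    · rw [Prod.mk.injEq] at h1
      exact absurd (h1.2 ▸ h2) (hjroot u')
    · rw [Prod.mk.injEq] at h2
      exact absurd (h2.2 ▸ h1) (hjroot u)
    · exact hU _ _ _ h1 h2
  have hUE : IndegOne (F.erase (j, K)) := indegOne_subset (Finset.erase_subset _ _) hU
  have hKrootE : IsRt (F.erase (j, K)) K := by
    intro u hu
    obtain ⟨hne, huF⟩ := Finset.mem_erase.mp hu
    exact hne (by rw [hU _ _ _ huF hjK])
  have hC' : NoCycle F' := by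
    apply noCycle_insert (noCycle_subset (Finset.erase_subset _ _) hC)
    intro hp
    obtain ⟨t, htE⟩ := exists_iterate_of_rtg hUE hp
    -- chains in the erased forest agree with F up to t₀ - 1 and then stay at K
    have htrans : ∀ s ≤ t₀ - 1, (par (F.erase (j, K)))^[s] m = (par F)^[s] m := by
      apply iterate_transfer hU hUE
      intro s hs u
      rw [Finset.mem_erase]
      have := hchain_ne s hs
      exact ⟨fun h => ⟨fun hc => this.2 (congrArg Prod.snd hc), h⟩, fun h => h.2⟩
    have hstayK : ∀ s, (par (F.erase (j, K)))^[s + (t₀ - 1)] m = K := by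
      intro s
      rw [Function.iterate_add_apply, htrans (t₀ - 1) le_rfl, ← hKdef]
      exact Function.iterate_fixed (isRt_par hKrootE) s
    rcases Nat.lt_or_ge t (t₀ - 1) with hcase | hcase
    · rw [htrans t (by omega)] at htE
      exact hmin t (by omega) htE
    · rw [show t = (t - (t₀ - 1)) + (t₀ - 1) by omega, hstayK] at htE
      exact hKj htE
  have hpos' : ∀ e ∈ F', 0 < a e.2 e.1 := by
    intro e he
    rcases Finset.mem_insert.mp he with rfl | h
    · exact ham
    · exact hpos e (Finset.mem_of_mem_erase h)
  have hmjE : (m, j) ∉ F.erase (j, K) := fun h => hmj (Finset.mem_of_mem_erase h)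
  have hcard' : F'.card = maxForestSize a := by
    rw [hF'def, Finset.card_insert_of_notMem hmjE, Finset.card_erase_of_mem hjK]
    have : 0 < F.card := Finset.card_pos.mpr ⟨_, hjK⟩
    omega
  have hF'M : F' ∈ maxForests a :=
    mem_maxForests.mpr ⟨isOutForest_iff.mpr ⟨hpos', hU', hC'⟩, hcard'⟩
  have hpar'j : par F' j = m := par_eq hU' (by rw [hmem']; exact .inl rfl)
  have hKroot' : IsRt F' K := by
    intro u hu
    rw [hmem'] at hu
    rcases hu with hu | ⟨hu, hu'⟩
    · exact hKj (congrArg Prod.snd hu)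
    · exact hu' (by rw [hU _ _ _ hu hjK])
  have htransF' : ∀ s ≤ t₀ - 1, (par F')^[s] m = (par F)^[s] m := by
    apply iterate_transfer hU hU'
    intro s hs u
    exact hsame _ u (hchain_ne s hs).1 (hchain_ne s hs).2
  have hrtm' : rt F' m = K := by
    rw [← rt_iterate hU' hC' m (t₀ - 1), htransF' (t₀ - 1) le_rfl, ← hKdef]
    exact rt_eq_self hKroot'
  have hrtj' : rt F' j = K := by
    rw [← rt_par hU' hC' j, hpar'j, hrtm']
  have hrti' : rt F' i = K := by
    -- follow i's chain to its first hit of {j, K}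
    have hexi : ∃ s, (par F)^[s] i = j ∨ (par F)^[s] i = K := ⟨n, .inl hrt⟩
    set s₀ := Nat.find hexi with hs₀def
    have hs₀ : (par F)^[s₀] i = j ∨ (par F)^[s₀] i = K := Nat.find_spec hexi
    have hmins₀ : ∀ s < s₀, ¬((par F)^[s] i = j ∨ (par F)^[s] i = K) :=
      fun s hs => Nat.find_min hexi hs
    have htr : ∀ s ≤ s₀, (par F')^[s] i = (par F)^[s] i := by
      apply iterate_transfer hU hU'
      intro s hs u
      have hne := hmins₀ s hs
      push_neg at hne
      exact hsame _ u hne.1 hne.2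
    have : rt F' i = rt F' ((par F)^[s₀] i) := by
      rw [← htr s₀ le_rfl, rt_iterate hU' hC']
    rw [this]
    rcases hs₀ with hz | hz
    · rw [hz, hrtj']
    · rw [hz]
      exact rt_eq_self hKroot'
  exact ⟨hjK, hKj, hmj, hF'M, hrti', hpar'j, haKj⟩

end InvolutionD

section InvolutionD2

variable {a : Matrix (Fin n) (Fin n) ℝ}

lemma goodDminus_spec {i j m : Fin n} {F : Finset (Fin n × Fin n)} (hm : m ≠ j)
    (hF : F ∈ maxForests a) (ham : 0 < a m j) (hrt : rt F i = m) :
    (par F j, j) ∈ F ∧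
    par F j ≠ j ∧
    (j, m) ∉ F ∧
    insert (j, m) (F.erase (par F j, j)) ∈ maxForests a ∧
    rt (insert (j, m) (F.erase (par F j, j))) i = j ∧
    0 < a j (par F j) ∧
    (∃ hex : (∃ t, (par (insert (j, m) (F.erase (par F j, j))))^[t] (par F j) = j),
      (par (insert (j, m) (F.erase (par F j, j))))^[Nat.find hex - 1] (par F j) = m) := by
  obtain ⟨hFf, hFc⟩ := mem_maxForests.mp hF
  obtain ⟨hpos, hU, hC⟩ := isOutForest_iff.mp hFf
  have hmroot : IsRt F m := by rw [← hrt]; exact isRt_rt hU hC i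
  have hrtgmj : Relation.ReflTransGen (fun x y => (x, y) ∈ F) m j :=
    reach_of_root_arc hF hmroot ham (fun hc => hm hc.symm)
  have hjnotroot : ¬ IsRt F j := fun hr => hm ((rtg_into_root hr hrtgmj).symm ▸ rfl)
  set Q := par F j with hQdef
  have hQj : (Q, j) ∈ F := par_mem hjnotroot
  have hQne : Q ≠ j := by
    intro h
    have := hQj
    rw [h] at this
    exact no_self_arc hC j this
  have haQ : 0 < a j Q := hpos (Q, j) hQj
  have hjm : (j, m) ∉ F := hmroot j
  have hrtFj : rt F j = m := by
    rw [rt_eq_of_rtg hU hC hrtgmj, rt_eq_self hmroot]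
  have hrtFQ : rt F Q = m := by
    rw [hQdef, rt_par hU hC j, hrtFj]
  -- the chain of Q in F never passes through j
  have hQnoj : ∀ s, (par F)^[s] Q ≠ j := by
    intro s hc
    have h1 := rtg_iter hU Q s
    rw [hc] at h1
    exact hC j (Relation.TransGen.tail' h1 hQj)
  set G := insert (j, m) (F.erase (Q, j)) with hGdef
  have hmem' : ∀ u v : Fin n,
      ((u, v) ∈ G ↔ ((u, v) = (j, m) ∨ ((u, v) ∈ F ∧ (u, v) ≠ (Q, j)))) := by
    intro u v
    rw [hGdef, Finset.mem_insert, Finset.mem_erase]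
    tauto
  have hsame : ∀ v u : Fin n, v ≠ j → v ≠ m → ((u, v) ∈ F ↔ (u, v) ∈ G) := by
    intro v u hvj hvm
    rw [hmem']
    constructor
    · intro h
      exact .inr ⟨h, fun hh => hvj (congrArg Prod.snd hh)⟩
    · rintro (h | ⟨h, _⟩)
      · exact absurd (congrArg Prod.snd h) hvm
      · exact h
  have hU' : IndegOne G := by
    intro u u' v h1 h2
    rw [hmem'] at h1 h2
    rcases h1 with h1 | ⟨h1, h1'⟩ <;> rcases h2 with h2 | ⟨h2, h2'⟩
    · rw [Prod.mk.injEq] at h1 h2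
      rw [h1.1, h2.1]
    · rw [Prod.mk.injEq] at h1
      exact absurd (h1.2 ▸ h2) (hmroot u')
    · rw [Prod.mk.injEq] at h2
      exact absurd (h2.2 ▸ h1) (hmroot u)
    · exact hU _ _ _ h1 h2
  have hUE : IndegOne (F.erase (Q, j)) := indegOne_subset (Finset.erase_subset _ _) hU
  have hjrootE : IsRt (F.erase (Q, j)) j := by
    intro u hu
    obtain ⟨hne, huF⟩ := Finset.mem_erase.mp hu
    exact hne (by rw [hU _ _ _ huF hQj])
  have hC' : NoCycle G := by
    apply noCycle_insert (noCycle_subset (Finset.erase_subset _ _) hC)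
    intro hp
    obtain ⟨t, htE⟩ := exists_iterate_of_rtg hUE hp
    rw [Function.iterate_fixed (isRt_par hjrootE) t] at htE
    exact hm htE.symm
  have hpos' : ∀ e ∈ G, 0 < a e.2 e.1 := by
    intro e he
    rcases Finset.mem_insert.mp he with rfl | h
    · exact ham
    · exact hpos e (Finset.mem_of_mem_erase h)
  have hjmE : (j, m) ∉ F.erase (Q, j) := fun h => hjm (Finset.mem_of_mem_erase h)
  have hcard' : G.card = maxForestSize a := by
    rw [hGdef, Finset.card_insert_of_notMem hjmE, Finset.card_erase_of_mem hQj]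
    have : 0 < F.card := Finset.card_pos.mpr ⟨_, hQj⟩
    omega
  have hGM : G ∈ maxForests a :=
    mem_maxForests.mpr ⟨isOutForest_iff.mpr ⟨hpos', hU', hC'⟩, hcard'⟩
  have hjrootG : IsRt G j := by
    intro u hu
    rw [hmem'] at hu
    rcases hu with hu | ⟨hu, hu'⟩
    · exact hm (congrArg Prod.snd hu).symm
    · exact hu' (by rw [hU _ _ _ hu hQj])
  have hparGm : par G m = j := par_eq hU' (by rw [hmem']; exact .inl rfl)
  have hrtGm : rt G m = j := by
    rw [← rt_par hU' hC' m, hparGm, rt_eq_self hjrootG]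
  have hrtGi : rt G i = j := by
    have hexi : ∃ s, (par F)^[s] i = j ∨ (par F)^[s] i = m := ⟨n, .inr hrt⟩
    set s₀ := Nat.find hexi with hs₀def
    have hs₀ : (par F)^[s₀] i = j ∨ (par F)^[s₀] i = m := Nat.find_spec hexi
    have hmins₀ : ∀ s < s₀, ¬((par F)^[s] i = j ∨ (par F)^[s] i = m) :=
      fun s hs => Nat.find_min hexi hs
    have htr : ∀ s ≤ s₀, (par G)^[s] i = (par F)^[s] i := by
      apply iterate_transfer hU hU'
      intro s hs u
      have hne := hmins₀ s hs
      push_neg at hne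
      exact hsame _ u hne.1 hne.2
    have : rt G i = rt G ((par F)^[s₀] i) := by
      rw [← htr s₀ le_rfl, rt_iterate hU' hC']
    rw [this]
    rcases hs₀ with hz | hz
    · rw [hz, rt_eq_self hjrootG]
    · rw [hz, hrtGm]
  -- the chain of Q in G : first hits m, then j
  have hexQm : ∃ s, (par F)^[s] Q = m := by
    refine ⟨n, ?_⟩
    rw [← rt]
    exact hrtFQ
  have hfind : ∃ hex : (∃ t, (par G)^[t] Q = j),
      (par G)^[Nat.find hex - 1] Q = m := by
    set s₁ := Nat.find hexQm with hs₁def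
    have hs₁ : (par F)^[s₁] Q = m := Nat.find_spec hexQm
    have hmins₁ : ∀ s < s₁, (par F)^[s] Q ≠ m := fun s hs => Nat.find_min hexQm hs
    have htr : ∀ s ≤ s₁, (par G)^[s] Q = (par F)^[s] Q := by
      apply iterate_transfer hU hU'
      intro s hs u
      exact hsame _ u (hQnoj s) (hmins₁ s hs)
    have hGs₁ : (par G)^[s₁] Q = m := by rw [htr s₁ le_rfl, hs₁]
    have hGs₁1 : (par G)^[s₁ + 1] Q = j := by
      rw [Function.iterate_succ_apply', hGs₁, hparGm]
    have hex : ∃ t, (par G)^[t] Q = j := ⟨s₁ + 1, hGs₁1⟩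
    refine ⟨hex, ?_⟩
    have hfindeq : Nat.find hex = s₁ + 1 := by
      rw [Nat.find_eq_iff]
      refine ⟨hGs₁1, ?_⟩
      intro t ht
      rcases Nat.lt_or_ge t s₁ with hcase | hcase
      · rw [htr t (by omega)]
        intro hc
        exact hQnoj t hc
      · have : t = s₁ := by omega
        rw [this, hGs₁]
        intro hc
        exact hm hc
    rw [hfindeq]
    simpa using hGs₁
  exact ⟨hQj, hQne, hjm, hGM, hrtGi, haQ, hfind⟩

end InvolutionD2

section SumD

variable {a : Matrix (Fin n) (Fin n) ℝ}

open Classical in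
lemma sumD (hnn : ∀ i j, 0 ≤ a i j) (i j : Fin n) :
    ∑ x ∈ (Finset.univ.erase j) ×ˢ maxForests a,
      (forestWeight a x.2 *
        (a j x.1 * (if rt x.2 i = j then (1:ℝ) else 0)
          - a x.1 j * (if rt x.2 i = x.1 then 1 else 0))) = 0 := by
  refine Finset.sum_involution
    (fun x hx =>
      if h₁ : 0 < a j x.1 ∧ rt x.2 i = j then
        (if hex : ∃ t, (par x.2)^[t] x.1 = j then
          ((par x.2)^[Nat.find hex - 1] x.1,
            insert (x.1, j) (x.2.erase (j, (par x.2)^[Nat.find hex - 1] x.1)))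
        else x)
      else if h₂ : 0 < a x.1 j ∧ rt x.2 i = x.1 then
        (par x.2 j, insert (j, x.1) (x.2.erase (par x.2 j, j)))
      else x)
    ?_ ?_ ?_ ?_
  · -- sums to zero
    rintro ⟨m, F⟩ hx
    obtain ⟨hmm, hFM⟩ := Finset.mem_product.mp hx
    have hm : m ≠ j := (Finset.mem_erase.mp hmm).1
    dsimp only
    by_cases h₁ : 0 < a j m ∧ rt F i = j
    · have hex := goodDplus_ex hm hFM h₁.1 h₁.2
      rw [dif_pos h₁, dif_pos hex]
      obtain ⟨hjK, hKj, hmj, hF'M, hrti', hpar'j, haKj⟩ :=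
        goodDplus_spec hm hFM h₁.1 h₁.2 hex
      have hmjE : (m, j) ∉ F.erase (j, (par F)^[Nat.find hex - 1] m) :=
        fun h => hmj (Finset.mem_of_mem_erase h)
      have hwF : forestWeight a F = a ((par F)^[Nat.find hex - 1] m) j *
          forestWeight a (F.erase (j, (par F)^[Nat.find hex - 1] m)) := by
        rw [forestWeight, ← Finset.mul_prod_erase F _ hjK]
        rfl
      have hwF' : forestWeight a
            (insert (m, j) (F.erase (j, (par F)^[Nat.find hex - 1] m)))
          = a j m * forestWeight a (F.erase (j, (par F)^[Nat.find hex - 1] m)) := by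
        rw [forestWeight, Finset.prod_insert hmjE]
        rfl
      rw [hrti', if_pos h₁.2, if_neg (fun hc : rt F i = m => hm (by rw [h₁.2] at hc; exact hc.symm)),
        if_neg hKj, if_pos rfl, hwF, hwF']
      ring
    · by_cases h₂ : 0 < a m j ∧ rt F i = m
      · rw [dif_neg h₁, dif_pos h₂]
        obtain ⟨hQj, hQne, hjm, hGM, hrtGi, haQ, _⟩ :=
          goodDminus_spec hm hFM h₂.1 h₂.2
        have hjmE : (j, m) ∉ F.erase (par F j, j) :=
          fun h => hjm (Finset.mem_of_mem_erase h)
        have hwF : forestWeight a F = a j (par F j) *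
            forestWeight a (F.erase (par F j, j)) := by
          rw [forestWeight, ← Finset.mul_prod_erase F _ hQj]
          rfl
        have hwG : forestWeight a (insert (j, m) (F.erase (par F j, j)))
            = a m j * forestWeight a (F.erase (par F j, j)) := by
          rw [forestWeight, Finset.prod_insert hjmE]
          rfl
        rw [hrtGi, if_pos rfl,
          if_neg (fun hc : rt F i = j => hm (by rw [h₂.2] at hc; exact hc)),
          if_pos h₂.2, if_neg hQne.symm, hwF, hwG]
        ring
      · rw [dif_neg h₁, dif_neg h₂]
        have hzero : forestWeight a F *
            (a j m * (if rt F i = j then (1:ℝ) else 0)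
              - a m j * (if rt F i = m then 1 else 0)) = 0 := by
          by_cases hc1 : rt F i = j
          · have : ¬ 0 < a j m := fun hp => h₁ ⟨hp, hc1⟩
            have h0 : a j m = 0 := le_antisymm (not_lt.mp this) (hnn j m)
            rw [h0, if_neg (fun hc : rt F i = m => hm (by rw [hc1] at hc; exact hc.symm))]
            ring
          · rw [if_neg hc1]
            by_cases hc2 : rt F i = m
            · have : ¬ 0 < a m j := fun hp => h₂ ⟨hp, hc2⟩
              have h0 : a m j = 0 := le_antisymm (not_lt.mp this) (hnn m j)
              rw [h0]
              ring
            · rw [if_neg hc2]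
              ring
        rw [hzero]
        ring
  · -- nonzero terms move
    rintro ⟨m, F⟩ hx hne
    obtain ⟨hmm, hFM⟩ := Finset.mem_product.mp hx
    have hm : m ≠ j := (Finset.mem_erase.mp hmm).1
    dsimp only at hne ⊢
    by_cases h₁ : 0 < a j m ∧ rt F i = j
    · have hex := goodDplus_ex hm hFM h₁.1 h₁.2
      rw [dif_pos h₁, dif_pos hex]
      obtain ⟨hjK, hKj, hmj, hF'M, hrti', hpar'j, haKj⟩ :=
        goodDplus_spec hm hFM h₁.1 h₁.2 hex
      intro hc
      have : insert (m, j) (F.erase (j, (par F)^[Nat.find hex - 1] m)) = F :=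
        congrArg Prod.snd hc
      rw [← this] at hmj
      exact hmj (Finset.mem_insert_self _ _)
    · by_cases h₂ : 0 < a m j ∧ rt F i = m
      · rw [dif_neg h₁, dif_pos h₂]
        obtain ⟨hQj, hQne, hjm, hGM, hrtGi, haQ, _⟩ :=
          goodDminus_spec hm hFM h₂.1 h₂.2
        intro hc
        have : insert (j, m) (F.erase (par F j, j)) = F := congrArg Prod.snd hc
        rw [← this] at hjm
        exact hjm (Finset.mem_insert_self _ _)
      · exfalso
        apply hne
        by_cases hc1 : rt F i = j
        · have h0 : a j m = 0 :=
            le_antisymm (not_lt.mp (fun hp => h₁ ⟨hp, hc1⟩)) (hnn j m)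
          rw [h0, if_neg (fun hc : rt F i = m => hm (by rw [hc1] at hc; exact hc.symm))]
          ring
        · rw [if_neg hc1]
          by_cases hc2 : rt F i = m
          · have h0 : a m j = 0 :=
              le_antisymm (not_lt.mp (fun hp => h₂ ⟨hp, hc2⟩)) (hnn m j)
            rw [h0]
            ring
          · rw [if_neg hc2]
            ring
  · -- maps into the set
    rintro ⟨m, F⟩ hx
    obtain ⟨hmm, hFM⟩ := Finset.mem_product.mp hx
    have hm : m ≠ j := (Finset.mem_erase.mp hmm).1
    dsimp only
    by_cases h₁ : 0 < a j m ∧ rt F i = j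
    · have hex := goodDplus_ex hm hFM h₁.1 h₁.2
      rw [dif_pos h₁, dif_pos hex]
      obtain ⟨hjK, hKj, hmj, hF'M, hrti', hpar'j, haKj⟩ :=
        goodDplus_spec hm hFM h₁.1 h₁.2 hex
      exact Finset.mem_product.mpr ⟨Finset.mem_erase.mpr ⟨hKj, Finset.mem_univ _⟩, hF'M⟩
    · by_cases h₂ : 0 < a m j ∧ rt F i = m
      · rw [dif_neg h₁, dif_pos h₂]
        obtain ⟨hQj, hQne, hjm, hGM, hrtGi, haQ, _⟩ :=
          goodDminus_spec hm hFM h₂.1 h₂.2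
        exact Finset.mem_product.mpr ⟨Finset.mem_erase.mpr ⟨hQne, Finset.mem_univ _⟩, hGM⟩
      · rw [dif_neg h₁, dif_neg h₂]
        exact hx
  · -- involution
    rintro ⟨m, F⟩ hx
    obtain ⟨hmm, hFM⟩ := Finset.mem_product.mp hx
    have hm : m ≠ j := (Finset.mem_erase.mp hmm).1
    dsimp only
    by_cases h₁ : 0 < a j m ∧ rt F i = j
    · have hex := goodDplus_ex hm hFM h₁.1 h₁.2
      simp only [dif_pos h₁, dif_pos hex]
      obtain ⟨hjK, hKj, hmj, hF'M, hrti', hpar'j, haKj⟩ :=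
        goodDplus_spec hm hFM h₁.1 h₁.2 hex
      have hmjE : (m, j) ∉ F.erase (j, (par F)^[Nat.find hex - 1] m) :=
        fun h => hmj (Finset.mem_of_mem_erase h)
      have hnot1 : ¬ (0 < a j ((par F)^[Nat.find hex - 1] m) ∧
          rt (insert (m, j) (F.erase (j, (par F)^[Nat.find hex - 1] m))) i = j) := by
        rintro ⟨_, hc⟩
        rw [hrti'] at hc
        exact hKj hc
      have hcond2 : (0 < a ((par F)^[Nat.find hex - 1] m) j ∧
          rt (insert (m, j) (F.erase (j, (par F)^[Nat.find hex - 1] m))) i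
            = (par F)^[Nat.find hex - 1] m) := ⟨haKj, hrti'⟩
      rw [dif_neg hnot1, dif_pos hcond2, Prod.mk.injEq]
      refine ⟨hpar'j, ?_⟩
      rw [hpar'j, Finset.erase_insert hmjE, Finset.insert_erase hjK]
    · by_cases h₂ : 0 < a m j ∧ rt F i = m
      · simp only [dif_neg h₁, dif_pos h₂]
        obtain ⟨hQj, hQne, hjm, hGM, hrtGi, haQ, hex', hval⟩ :=
          goodDminus_spec hm hFM h₂.1 h₂.2
        have hjmE : (j, m) ∉ F.erase (par F j, j) :=
          fun h => hjm (Finset.mem_of_mem_erase h)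
        have hcond1 : (0 < a j (par F j) ∧
            rt (insert (j, m) (F.erase (par F j, j))) i = j) := ⟨haQ, hrtGi⟩
        rw [dif_pos hcond1, dif_pos hex', hval, Prod.mk.injEq]
        refine ⟨rfl, ?_⟩
        rw [Finset.erase_insert hjmE, Finset.insert_erase hQj]
      · simp only [dif_neg h₁, dif_neg h₂]

end SumD

section MatrixD

variable {a : Matrix (Fin n) (Fin n) ℝ}

lemma barJ_mul_kirchhoff (hnn : ∀ i j, 0 ≤ a i j) : barJ a * kirchhoff a = 0 := by
  classical
  ext i j
  rw [Matrix.mul_apply, Matrix.zero_apply]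
  set M := maxForests a with hM
  set N : Fin n → ℝ := fun k => ∑ F ∈ M, (if rt F i = k then (1:ℝ) else 0) * forestWeight a F
    with hN
  have h1 : ∀ k, barJ a i k * kirchhoff a k j
      = (N k * kirchhoff a k j) / (∑ F ∈ M, forestWeight a F) := by
    intro k
    rw [barJ_apply, div_mul_eq_mul_div]
  rw [Finset.sum_congr rfl (fun k _ => h1 k), ← Finset.sum_div]
  have key : ∑ k, N k * kirchhoff a k j = 0 := by
    have step1 : ∑ k, N k * kirchhoff a k j
        = (∑ m ∈ Finset.univ.erase j, N j * a j m)
          + ∑ m ∈ Finset.univ.erase j, (-(N m * a m j)) := by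
      rw [← Finset.add_sum_erase _ (fun k => N k * kirchhoff a k j) (Finset.mem_univ j),
        kirchhoff_entry_diag, Finset.mul_sum]
      congr 1
      refine Finset.sum_congr rfl (fun k hk => ?_)
      rw [kirchhoff_entry_off a (Ne.symm (Finset.mem_erase.mp hk).1)]
      ring
    rw [step1, ← Finset.sum_add_distrib]
    have step2 : ∀ m ∈ Finset.univ.erase j, N j * a j m + -(N m * a m j)
        = ∑ F ∈ M, (forestWeight a F *
            (a j m * (if rt F i = j then (1:ℝ) else 0)
              - a m j * (if rt F i = m then 1 else 0))) := by
      intro m _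
      have hterm : ∀ F ∈ M, forestWeight a F *
            (a j m * (if rt F i = j then (1:ℝ) else 0)
              - a m j * (if rt F i = m then 1 else 0))
          = ((if rt F i = j then (1:ℝ) else 0) * forestWeight a F) * a j m
            - ((if rt F i = m then (1:ℝ) else 0) * forestWeight a F) * a m j := fun F _ => by
        ring
      rw [Finset.sum_congr rfl hterm, Finset.sum_sub_distrib, ← Finset.sum_mul, ← Finset.sum_mul,
        hN]
      ring
    rw [Finset.sum_congr rfl step2, ← Finset.sum_product']
    exact sumD hnn i j
  rw [key, zero_div]

end MatrixD

section Kernel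

variable {a : Matrix (Fin n) (Fin n) ℝ}

open Classical in
lemma barJ_row_sum (a : Matrix (Fin n) (Fin n) ℝ) (i : Fin n) : ∑ j, barJ a i j = 1 := by
  rw [Finset.sum_congr rfl (fun j _ => barJ_apply a i j), ← Finset.sum_div, Finset.sum_comm]
  have h1 : ∀ F ∈ maxForests a,
      ∑ j, (if rt F i = j then (1:ℝ) else 0) * forestWeight a F = forestWeight a F := by
    intro F _
    rw [← Finset.sum_mul, Finset.sum_ite_eq (Finset.univ) (rt F i) (fun _ => (1:ℝ)),
      if_pos (Finset.mem_univ _), one_mul]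
  rw [Finset.sum_congr rfl h1, div_self (ne_of_gt (denom_pos a))]

lemma basis_backward_closed {S : Set (Fin n)} (hS : S ∈ basisClasses a) {u v : Fin n}
    (h : Reach a u v) (hv : v ∈ S) : u ∈ S := by
  induction h using Relation.ReflTransGen.head_induction_on with
  | refl => exact hv
  | head hstep _ ih =>
    rename_i x y _
    by_contra hx
    exact hS.2 x y hx ih hstep

lemma harmonic_step (hnn : ∀ i j, 0 ≤ a i j) {x : Fin n → ℝ}
    (hx : (kirchhoff a).mulVec x = 0) {w : Fin n} {Mv : ℝ} (hw : x w = Mv)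
    (hb : ∀ k, k ≠ w → 0 < a w k → x k ≤ Mv) :
    ∀ k, k ≠ w → 0 < a w k → x k = Mv := by
  have hw0 : ∑ k, kirchhoff a w k * x k = 0 := by
    have := congrFun hx w
    rwa [Matrix.mulVec, dotProduct] at this
  have h0 : ∑ k ∈ Finset.univ.erase w, a w k * (Mv - x k) = 0 := by
    rw [← hw0, ← Finset.add_sum_erase _ (fun k => kirchhoff a w k * x k) (Finset.mem_univ w),
      kirchhoff_entry_diag, Finset.sum_mul, ← Finset.sum_add_distrib]
    refine Finset.sum_congr rfl (fun k hk => ?_)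
    rw [kirchhoff_entry_off a (Finset.mem_erase.mp hk).1, hw]
    ring
  have hnonneg : ∀ k ∈ Finset.univ.erase w, 0 ≤ a w k * (Mv - x k) := by
    intro k hk
    rcases (hnn w k).eq_or_lt with hz | hp
    · rw [← hz]; ring_nf; exact le_rfl
    · exact mul_nonneg (le_of_lt hp)
        (sub_nonneg.mpr (hb k (Finset.mem_erase.mp hk).1 hp))
  have hterm := (Finset.sum_eq_zero_iff_of_nonneg hnonneg).mp h0
  intro k hk hak
  have := hterm k (Finset.mem_erase.mpr ⟨hk, Finset.mem_univ k⟩)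
  have h2 : Mv - x k = 0 := by
    rcases mul_eq_zero.mp this with h | h
    · exact absurd h (ne_of_gt hak)
    · exact h
  linarith

lemma harmonic_prop (hnn : ∀ i j, 0 ≤ a i j) {x : Fin n → ℝ}
    (hx : (kirchhoff a).mulVec x = 0) {W : Set (Fin n)} {Mv : ℝ}
    (hcl : ∀ w ∈ W, ∀ k, 0 < a w k → k ∈ W) (hle : ∀ k ∈ W, x k ≤ Mv)
    {u v : Fin n} (h : Reach a u v) (hv : v ∈ W) (hxv : x v = Mv) :
    x u = Mv ∧ u ∈ W := by
  induction h using Relation.ReflTransGen.head_induction_on with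
  | refl => exact ⟨hxv, hv⟩
  | head hstep _ ih =>
    rename_i z y _
    obtain ⟨hxy, hyW⟩ := ih
    have hzW : z ∈ W := hcl y hyW z hstep
    by_cases hzy : z = y
    · exact ⟨hzy ▸ hxy, hzW⟩
    · refine ⟨?_, hzW⟩
      exact harmonic_step hnn hx hxy
        (fun k hk hak => hle k (hcl y hyW k hak)) z hzy hstep

open Classical in
lemma ker_vanish_nonpos (hnn : ∀ i j, 0 ≤ a i j) {x : Fin n → ℝ}
    (hx : (kirchhoff a).mulVec x = 0)
    (hvan : ∀ v : Fin n, (∃ S ∈ basisClasses a, v ∈ S) → x v = 0) :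
    ∀ i, x i ≤ 0 := by
  by_contra hcon
  push_neg at hcon
  obtain ⟨i, hi⟩ := hcon
  have hne : (Finset.univ : Finset (Fin n)).Nonempty := ⟨i, Finset.mem_univ i⟩
  obtain ⟨i₀, _, hmax⟩ := Finset.exists_max_image Finset.univ x hne
  have hMpos : 0 < x i₀ := lt_of_lt_of_le hi (hmax i (Finset.mem_univ i))
  set R : Finset (Fin n) := Finset.univ.filter (fun u => Reach a u i₀) with hR
  have hR_eq : ∀ u ∈ R, x u = x i₀ := by
    intro u hu
    exact (harmonic_prop hnn hx (W := Set.univ) (fun _ _ _ _ => trivial)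
      (fun k _ => hmax k (Finset.mem_univ k)) ((Finset.mem_filter.mp hu).2)
      trivial rfl).1
  have hRne : R.Nonempty := ⟨i₀, Finset.mem_filter.mpr ⟨Finset.mem_univ _, .refl⟩⟩
  obtain ⟨v, hvR, hvmin⟩ := Finset.exists_min_image R
    (fun v => (Finset.univ.filter (fun u => Reach a u v)).card) hRne
  have hvReach : Reach a v i₀ := (Finset.mem_filter.mp hvR).2
  have hbasis : strongClass a v ∈ basisClasses a := by
    refine ⟨⟨v, rfl⟩, ?_⟩
    intro u w hu hw harc
    have huv : Reach a u v := Relation.ReflTransGen.head harc hw.1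
    have hvu : ¬ Reach a v u := fun hvu => hu ⟨huv, hvu⟩
    have hsub : Finset.univ.filter (fun z => Reach a z u)
        ⊂ Finset.univ.filter (fun z => Reach a z v) := by
      constructor
      · intro z hz
        exact Finset.mem_filter.mpr ⟨Finset.mem_univ _,
          ((Finset.mem_filter.mp hz).2).trans huv⟩
      · intro hsub'
        have : v ∈ Finset.univ.filter (fun z => Reach a z u) :=
          hsub' (Finset.mem_filter.mpr ⟨Finset.mem_univ _, .refl⟩)
        exact hvu (Finset.mem_filter.mp this).2
    have hcard := Finset.card_lt_card hsub
    have huR : u ∈ R := Finset.mem_filter.mpr ⟨Finset.mem_univ _, huv.trans hvReach⟩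
    exact absurd (hvmin u huR) (not_le.mpr hcard)
  have hv0 : x v = 0 := hvan v ⟨strongClass a v, hbasis, ⟨.refl, .refl⟩⟩
  have hvM : x v = x i₀ := hR_eq v hvR
  linarith

lemma ker_const_on_basis (hnn : ∀ i j, 0 ≤ a i j) {x : Fin n → ℝ}
    (hx : (kirchhoff a).mulVec x = 0) {S : Set (Fin n)} (hS : S ∈ basisClasses a)
    {u w : Fin n} (hu : u ∈ S) (hw : w ∈ S) : x u = x w := by
  classical
  obtain ⟨v₀, hv₀⟩ := hS.1
  have hSmem : ∀ z, z ∈ S ↔ (Reach a z v₀ ∧ Reach a v₀ z) := by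
    intro z
    rw [hv₀]
    exact Iff.rfl
  have hcl : ∀ w' ∈ S, ∀ k, 0 < a w' k → k ∈ S := by
    intro w' hw' k hak
    by_contra hk
    exact hS.2 k w' hk hw' hak
  set SF : Finset (Fin n) := Finset.univ.filter (· ∈ S) with hSF
  have hSFne : SF.Nonempty := ⟨u, Finset.mem_filter.mpr ⟨Finset.mem_univ _, hu⟩⟩
  obtain ⟨im, himSF, hmax⟩ := Finset.exists_max_image SF x hSFne
  have himS : im ∈ S := (Finset.mem_filter.mp himSF).2
  have hle : ∀ k ∈ S, x k ≤ x im :=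
    fun k hk => hmax k (Finset.mem_filter.mpr ⟨Finset.mem_univ _, hk⟩)
  have key : ∀ z ∈ S, x z = x im := by
    intro z hz
    have hreach : Reach a z im :=
      ((hSmem z).mp hz).1.trans ((hSmem im).mp himS).2
    exact (harmonic_prop hnn hx hcl hle hreach himS rfl).1
  rw [key u hu, key w hw]

lemma barJ_support {i : Fin n} {S : Set (Fin n)} (hS : S ∈ basisClasses a) (hi : i ∈ S)
    {j : Fin n} (hne : barJ a i j ≠ 0) : j ∈ S := by
  classical
  have hex : ∃ F ∈ maxForests a, rt F i = j := by
    by_contra hc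
    push_neg at hc
    apply hne
    rw [barJ_apply]
    have h0 : ∀ F ∈ maxForests a,
        (if rt F i = j then (1:ℝ) else 0) * forestWeight a F = 0 := by
      intro F hF
      rw [if_neg (hc F hF), zero_mul]
    rw [Finset.sum_congr rfl h0, Finset.sum_const_zero, zero_div]
  obtain ⟨F, hFM, hrt⟩ := hex
  obtain ⟨hFf, _⟩ := mem_maxForests.mp hFM
  obtain ⟨hpos, hU, hC⟩ := isOutForest_iff.mp hFf
  have hrtg : Relation.ReflTransGen (fun u v => (u, v) ∈ F) j i := by
    rw [← hrt]
    exact rtg_rt hU i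
  have hreach : Reach a j i := Relation.ReflTransGen.mono (fun u v h => hpos (u, v) h) _ _ hrtg
  exact basis_backward_closed hS hreach hi

end Kernel

section Assembly

variable {a : Matrix (Fin n) (Fin n) ℝ}

lemma barJ_mulVec_ker (hnn : ∀ i j, 0 ≤ a i j) {x : Fin n → ℝ}
    (hx : (kirchhoff a).mulVec x = 0) : (barJ a).mulVec x = x := by
  classical
  set y : Fin n → ℝ := (barJ a).mulVec x - x with hy
  have hLy : (kirchhoff a).mulVec y = 0 := by
    rw [hy, Matrix.mulVec_sub, Matrix.mulVec_mulVec, kirchhoff_mul_barJ hnn, hx,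
      Matrix.zero_mulVec, sub_zero]
  have hvan : ∀ v : Fin n, (∃ S ∈ basisClasses a, v ∈ S) → y v = 0 := by
    rintro v ⟨S, hS, hv⟩
    have hrow : ∀ j, barJ a v j * x j = barJ a v j * x v := by
      intro j
      by_cases hz : barJ a v j = 0
      · rw [hz, zero_mul, zero_mul]
      · rw [ker_const_on_basis hnn hx hS (barJ_support hS hv hz) hv]
    have hJx : (barJ a).mulVec x v = x v := by
      rw [Matrix.mulVec, dotProduct,
        Finset.sum_congr rfl (fun j _ => hrow j), ← Finset.sum_mul, barJ_row_sum, one_mul]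
    rw [hy, Pi.sub_apply, hJx, sub_self]
  have h1 : ∀ i, y i ≤ 0 := ker_vanish_nonpos hnn hLy hvan
  have h2 : ∀ i, (-y) i ≤ 0 := by
    apply ker_vanish_nonpos hnn
    · rw [Matrix.mulVec_neg, hLy, neg_zero]
    · intro v hv
      rw [Pi.neg_apply, hvan v hv, neg_zero]
  have hy0 : y = 0 := by
    funext i
    have := h2 i
    rw [Pi.neg_apply] at this
    have := h1 i
    have h3 : (0:ℝ) ≤ y i := by
      have := h2 i
      rw [Pi.neg_apply] at this
      linarith
    exact le_antisymm (h1 i) h3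
  rw [hy] at hy0
  exact sub_eq_zero.mp hy0

end Assembly

end BJ

/-- The normalized matrix of maximum out-forests is the eigenprojection of the
Kirchhoff matrix at eigenvalue `0`: it is idempotent, its range is the kernel
of `L` and its kernel is the range of `L`. -/
theorem barJ_eigenprojection {n : ℕ} (a : Matrix (Fin n) (Fin n) ℝ)
    (hnn : ∀ i j, 0 ≤ a i j) :
    barJ a * barJ a = barJ a ∧
      LinearMap.range (barJ a).mulVecLin = LinearMap.ker (kirchhoff a).mulVecLin ∧
      LinearMap.ker (barJ a).mulVecLin = LinearMap.range (kirchhoff a).mulVecLin := by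
  have hLJ : kirchhoff a * barJ a = 0 := BJ.kirchhoff_mul_barJ hnn
  have hJL : barJ a * kirchhoff a = 0 := BJ.barJ_mul_kirchhoff hnn
  have hid : ∀ x : Fin n → ℝ, (kirchhoff a).mulVec x = 0 → (barJ a).mulVec x = x :=
    fun x hx => BJ.barJ_mulVec_ker hnn hx
  have hcolker : ∀ j : Fin n, (kirchhoff a).mulVec (fun k => barJ a k j) = 0 := by
    intro j
    funext i'
    have h1 : (kirchhoff a).mulVec (fun k => barJ a k j) i' = (kirchhoff a * barJ a) i' j := by
      rw [Matrix.mulVec, dotProduct, Matrix.mul_apply]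
    rw [h1, hLJ]
    rfl
  have hidem : barJ a * barJ a = barJ a := by
    ext i j
    have h := hid (fun k => barJ a k j) (hcolker j)
    have h2 : (barJ a * barJ a) i j = (barJ a).mulVec (fun k => barJ a k j) i := by
      rw [Matrix.mul_apply, Matrix.mulVec, dotProduct]
    rw [h2, h]
  have hrangeEq : LinearMap.range (barJ a).mulVecLin
      = LinearMap.ker (kirchhoff a).mulVecLin := by
    apply le_antisymm
    · rintro x ⟨y, rfl⟩
      rw [LinearMap.mem_ker, Matrix.mulVecLin_apply, Matrix.mulVecLin_apply,
        Matrix.mulVec_mulVec, hLJ, Matrix.zero_mulVec]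
    · intro x hx
      rw [LinearMap.mem_ker, Matrix.mulVecLin_apply] at hx
      exact ⟨x, by rw [Matrix.mulVecLin_apply, hid x hx]⟩
  refine ⟨hidem, hrangeEq, ?_⟩
  have hsub : LinearMap.range (kirchhoff a).mulVecLin
      ≤ LinearMap.ker (barJ a).mulVecLin := by
    rintro x ⟨y, rfl⟩
    rw [LinearMap.mem_ker, Matrix.mulVecLin_apply, Matrix.mulVecLin_apply,
      Matrix.mulVec_mulVec, hJL, Matrix.zero_mulVec]
  have hd1 := LinearMap.finrank_range_add_finrank_ker (barJ a).mulVecLin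
  have hd2 := LinearMap.finrank_range_add_finrank_ker (kirchhoff a).mulVecLin
  have hd3 : Module.finrank ℝ (LinearMap.range (barJ a).mulVecLin)
      = Module.finrank ℝ (LinearMap.ker (kirchhoff a).mulVecLin) := by
    rw [hrangeEq]
  exact (Submodule.eq_of_le_of_finrank_eq hsub (by omega)).symm
end

section
/- For the normalized matrix of maximum out-forests J̄ of a weighted digraph: J̄_{ij} ≠ 0 if and only if j belongs to some basis bicomponent and i is reachable from j by a directed path. -/
open Finset

variable {n : ℕ}

-- ===================== auxiliary development =====================

open Relation

section RelLemmas
variable {α : Type*} {r : α → α → Prop}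

/-- First crossing lemma. -/
lemma cross_lemma {P : α → Prop} : ∀ {u v : α}, ReflTransGen r u v → P v → ¬ P u →
    ∃ x y, r x y ∧ ¬ P x ∧ P y := by
  intro u v h
  induction h with
  | refl => intro hv hu; exact absurd hv hu
  | @tail b c hab hbc ih =>
    intro hc hu
    by_cases hb : P b
    · exact ih hb hu
    · exact ⟨b, c, hbc, hb, hc⟩

lemma rtg_insert {x y : α} (hyx : ¬ ReflTransGen r y x) :
    ∀ {a b : α}, ReflTransGen (fun p q => r p q ∨ (p = x ∧ q = y)) a b →
      ReflTransGen r a b ∨ (ReflTransGen r a x ∧ ReflTransGen r y b) := by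
  intro a b h
  induction h with
  | refl => exact Or.inl .refl
  | @tail b c hab hbc ih =>
    rcases hbc with hbc | ⟨rfl, rfl⟩
    · rcases ih with h1 | ⟨h1, h2⟩
      · exact Or.inl (h1.tail hbc)
      · exact Or.inr ⟨h1, h2.tail hbc⟩
    · rcases ih with h1 | ⟨h1, h2⟩
      · exact Or.inr ⟨h1, .refl⟩
      · exact absurd h2 hyx

lemma acyc_insert {x y : α} (hacyc : ∀ z, ¬ TransGen r z z) (hyx : ¬ ReflTransGen r y x) :
    ∀ z, ¬ TransGen (fun p q => r p q ∨ (p = x ∧ q = y)) z z := by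
  intro z hz
  rw [TransGen.head'_iff] at hz
  obtain ⟨w, hzw, hwz⟩ := hz
  rcases hzw with hzw | ⟨rfl, rfl⟩
  · rcases rtg_insert hyx hwz with h | ⟨h1, h2⟩
    · exact hacyc z (TransGen.head'_iff.mpr ⟨w, hzw, h⟩)
    · exact hyx (h2.tail hzw |>.trans h1)
  · rcases rtg_insert hyx hwz with h | ⟨h1, h2⟩
    · exact hyx h
    · exact hyx h1

/-- From a cycle, build an infinite walk. -/
lemma infwalk_of_cycle {x : α} (hx : TransGen r x x) :
    ∃ f : ℕ → α, ∀ k, r (f k) (f (k + 1)) := by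
  classical
  have hstep : ∀ y : α, ∃ z, (ReflTransGen r x y ∧ ReflTransGen r y x) →
      ((ReflTransGen r x z ∧ ReflTransGen r z x) ∧ r y z) := by
    intro y
    by_cases hy : ReflTransGen r x y ∧ ReflTransGen r y x
    · obtain ⟨hxy, hyx⟩ := hy
      rcases hyx.cases_head with rfl | ⟨z, hyz, hzx⟩
      · obtain ⟨z, hxz, hzx⟩ := TransGen.head'_iff.mp hx
        exact ⟨z, fun _ => ⟨⟨ReflTransGen.single hxz, hzx⟩, hxz⟩⟩
      · exact ⟨z, fun _ => ⟨⟨hxy.tail hyz, hzx⟩, hyz⟩⟩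
    · exact ⟨y, fun h => absurd h hy⟩
  choose σ hσ using hstep
  refine ⟨fun k => σ^[k] x, ?_⟩
  have mem : ∀ k, ReflTransGen r x (σ^[k] x) ∧ ReflTransGen r (σ^[k] x) x := by
    intro k
    induction k with
    | zero => exact ⟨.refl, .refl⟩
    | succ k ih =>
      rw [Function.iterate_succ_apply']
      exact (hσ _ ih).1
  intro k
  show r (σ^[k] x) (σ^[k+1] x)
  rw [Function.iterate_succ_apply']
  exact (hσ _ (mem k)).2

lemma cycle_of_infwalk [Finite α] {f : ℕ → α} (hf : ∀ k, r (f k) (f (k + 1))) :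
    ∃ x, TransGen r x x := by
  obtain ⟨k, l, hne, heq⟩ := Finite.exists_ne_map_eq_of_infinite f
  wlog hkl : k < l generalizing k l
  · exact this l k hne.symm heq.symm (by omega)
  have step : ∀ d : ℕ, TransGen r (f k) (f (k + d + 1)) := by
    intro d
    induction d with
    | zero => exact TransGen.single (hf k)
    | succ d ih => exact ih.tail (hf (k + d + 1))
  obtain ⟨d, rfl⟩ : ∃ d, l = k + d + 1 := ⟨l - k - 1, by omega⟩
  exact ⟨f k, heq ▸ step d⟩

end RelLemmas

section ForestLemmas
variable {a : Matrix (Fin n) (Fin n) ℝ}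

/-- The arc relation of a forest. -/
def frel (F : Finset (Fin n × Fin n)) : Fin n → Fin n → Prop := fun x y => (x, y) ∈ F

lemma frel_insert (x y : Fin n) (F : Finset (Fin n × Fin n)) :
    frel (insert (x, y) F) = fun p q => frel F p q ∨ (p = x ∧ q = y) := by
  funext p q
  rw [eq_iff_iff]
  simp only [frel, Finset.mem_insert, Prod.mk.injEq]
  tauto

lemma IsOutForest.acyc {F : Finset (Fin n × Fin n)} (h : IsOutForest a F) :
    ∀ z, ¬ TransGen (frel F) z z := by
  intro z hz
  exact h.2.2 (infwalk_of_cycle hz)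

lemma noWalk_of_acyc {F : Finset (Fin n × Fin n)} (h : ∀ z, ¬ TransGen (frel F) z z) :
    ¬ ∃ f : ℕ → Fin n, ∀ k, (f k, f (k + 1)) ∈ F := by
  rintro ⟨f, hf⟩
  obtain ⟨x, hx⟩ := cycle_of_infwalk (r := frel F) hf
  exact h x hx

open Classical in
/-- The roots (vertices with no incoming arc) of a forest. -/
noncomputable def rootSet (F : Finset (Fin n × Fin n)) : Finset (Fin n) :=
  univ.filter fun v => ∀ u, (u, v) ∉ F

lemma card_add_rootSet_card {F : Finset (Fin n × Fin n)} (h : IsOutForest a F) :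
    F.card + (rootSet F).card = n := by
  classical
  have himg : F.image Prod.snd = univ.filter (fun v => ∃ u, (u, v) ∈ F) := by
    ext v
    simp only [mem_image, mem_filter, mem_univ, true_and]
    constructor
    · rintro ⟨⟨u, w⟩, he, rfl⟩; exact ⟨u, he⟩
    · rintro ⟨u, hu⟩; exact ⟨(u, v), hu, rfl⟩
  have hinj : Set.InjOn Prod.snd (F : Set (Fin n × Fin n)) := by
    rintro ⟨u, v⟩ h1 ⟨u', v'⟩ h2 hsnd
    simp only at hsnd
    subst hsnd
    have := h.2.1 u u' v h1 h2
    simp [this]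
  have hcard : F.card = (univ.filter (fun v => ∃ u, (u, v) ∈ F)).card := by
    rw [← himg, Finset.card_image_of_injOn hinj]
  have : rootSet F = univ.filter (fun v => ¬ ∃ u, (u, v) ∈ F) := by
    ext v; simp [rootSet]
  rw [hcard, this, Finset.card_filter_add_card_filter_not, card_univ, Fintype.card_fin]

lemma exists_root {F : Finset (Fin n × Fin n)} (h : IsOutForest a F) (v : Fin n) :
    ∃ rt, rt ∈ rootSet F ∧ ReflTransGen (frel F) rt v := by
  classical
  suffices H : ∀ m (v : Fin n), (univ.filter fun x => ReflTransGen (frel F) x v).card ≤ m →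
      ∃ rt, rt ∈ rootSet F ∧ ReflTransGen (frel F) rt v by
    exact H n v (le_trans (card_filter_le _ _) (by simp))
  intro m
  induction m with
  | zero =>
    intro v hv
    exfalso
    have : v ∈ univ.filter fun x => ReflTransGen (frel F) x v := by
      simp only [mem_filter, mem_univ, true_and]; exact .refl
    have := Finset.card_pos.mpr ⟨v, this⟩
    omega
  | succ m ih =>
    intro v hv
    by_cases hp : ∃ u, (u, v) ∈ F
    · obtain ⟨p, hpF⟩ := hp
      have hsub : (univ.filter fun x => ReflTransGen (frel F) x p) ⊆
          univ.filter fun x => ReflTransGen (frel F) x v := by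
        intro x hx
        simp only [mem_filter, mem_univ, true_and] at hx ⊢
        exact hx.tail hpF
      have hvnot : v ∉ univ.filter fun x => ReflTransGen (frel F) x p := by
        simp only [mem_filter, mem_univ, true_and]
        intro hvp
        exact h.acyc v (TransGen.tail'_iff.mpr ⟨p, hvp, hpF⟩)
      have hvin : v ∈ univ.filter fun x => ReflTransGen (frel F) x v := by
        simp only [mem_filter, mem_univ, true_and]; exact .refl
      have hlt : (univ.filter fun x => ReflTransGen (frel F) x p).card <
          (univ.filter fun x => ReflTransGen (frel F) x v).card :=
        Finset.card_lt_card ⟨hsub, fun hsub' => hvnot (hsub' hvin)⟩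
      obtain ⟨rt, hrt, hpath⟩ := ih p (by omega)
      exact ⟨rt, hrt, hpath.tail hpF⟩
    · refine ⟨v, ?_, .refl⟩
      simp only [rootSet, mem_filter, mem_univ, true_and]
      exact fun u hu => hp ⟨u, hu⟩

lemma frel_le_reach {F : Finset (Fin n × Fin n)} (h : IsOutForest a F) {x y : Fin n}
    (hxy : ReflTransGen (frel F) x y) : Reach a x y :=
  ReflTransGen.mono (fun p q hpq => h.1 (p, q) hpq) _ _ hxy

end ForestLemmas

section ClassLemmas
variable {a : Matrix (Fin n) (Fin n) ℝ}

lemma mem_strongClass_self (v : Fin n) : v ∈ strongClass a v := ⟨.refl, .refl⟩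

lemma strongClass_eq_of_mem {u v : Fin n} (h : u ∈ strongClass a v) :
    strongClass a u = strongClass a v := by
  obtain ⟨h1, h2⟩ := h
  ext x
  exact ⟨fun ⟨g1, g2⟩ => ⟨g1.trans h1, h2.trans g2⟩, fun ⟨g1, g2⟩ => ⟨g1.trans h2, h1.trans g2⟩⟩

lemma basis_reach_closed {S : Set (Fin n)} (hS : S ∈ basisClasses a) {x y : Fin n}
    (hxy : Reach a x y) (hy : y ∈ S) : x ∈ S := by
  by_contra hx
  obtain ⟨p, q, hpq, hp, hq⟩ := cross_lemma (P := (· ∈ S)) hxy hy hx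
  exact hS.2 p q hp hq hpq

lemma exists_basis_reach (v : Fin n) :
    ∃ r, strongClass a r ∈ basisClasses a ∧ Reach a r v := by
  classical
  have hv : v ∈ univ.filter (fun u => Reach a u v) := by
    simp only [mem_filter, mem_univ, true_and]; exact .refl
  obtain ⟨u, hu, hmin⟩ := Finset.exists_min_image (univ.filter (fun u => Reach a u v))
    (fun u => (univ.filter (fun x => Reach a x u)).card) ⟨v, hv⟩
  have huv : Reach a u v := (mem_filter.mp hu).2
  refine ⟨u, ⟨⟨u, rfl⟩, ?_⟩, huv⟩
  intro w w' hw hw' harc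
  have hwu : Reach a w u := ReflTransGen.head harc hw'.1
  have hnuw : ¬ Reach a u w := fun h => hw ⟨hwu, h⟩
  have hsub : (univ.filter (fun x => Reach a x w)) ⊆ univ.filter (fun x => Reach a x u) := by
    intro x hx
    simp only [mem_filter, mem_univ, true_and] at hx ⊢
    exact hx.trans hwu
  have huin : u ∈ univ.filter (fun x => Reach a x u) := by
    simp only [mem_filter, mem_univ, true_and]; exact .refl
  have hunotin : u ∉ univ.filter (fun x => Reach a x w) := by
    simp only [mem_filter, mem_univ, true_and]; exact hnuw
  have hlt : (univ.filter (fun x => Reach a x w)).card <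
      (univ.filter (fun x => Reach a x u)).card :=
    Finset.card_lt_card ⟨hsub, fun h => hunotin (h huin)⟩
  have hwmem : w ∈ univ.filter (fun u => Reach a u v) := by
    simp only [mem_filter, mem_univ, true_and]
    exact hwu.trans huv
  have := hmin w hwmem
  omega

open Classical in
/-- A representative of each basis class, with the class of `j` represented by `j`. -/
noncomputable def repv (a : Matrix (Fin n) (Fin n) ℝ) (j : Fin n) (S : Set (Fin n)) : Fin n :=
  if S = strongClass a j then j
  else if h : ∃ v, v ∈ S then Classical.choose h else j

open Classical in
/-- The Finset of chosen representatives. -/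
noncomputable def Rset (a : Matrix (Fin n) (Fin n) ℝ) (j : Fin n) : Finset (Fin n) :=
  univ.filter fun v => strongClass a v ∈ basisClasses a ∧ v = repv a j (strongClass a v)

lemma repv_mem {j : Fin n} {S : Set (Fin n)} (hS : S ∈ basisClasses a) : repv a j S ∈ S := by
  unfold repv
  split
  · next h => rw [h]; exact mem_strongClass_self j
  · obtain ⟨v, rfl⟩ := hS.1
    rw [dif_pos ⟨v, mem_strongClass_self v⟩]
    exact Classical.choose_spec (⟨v, mem_strongClass_self v⟩ : ∃ u, u ∈ strongClass a v)

lemma repv_class {j : Fin n} {S : Set (Fin n)} (hS : S ∈ basisClasses a) :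
    strongClass a (repv a j S) = S := by
  obtain ⟨v, rfl⟩ := hS.1
  exact strongClass_eq_of_mem (repv_mem (a := a) (j := j) hS)

lemma mem_Rset (j : Fin n) (hj : strongClass a j ∈ basisClasses a) : j ∈ Rset a j := by
  classical
  simp only [Rset, mem_filter, mem_univ, true_and]
  exact ⟨hj, by rw [repv, if_pos rfl]⟩

lemma Rset_basis {j v : Fin n} (hv : v ∈ Rset a j) : strongClass a v ∈ basisClasses a := by
  classical
  exact (mem_filter.mp hv).2.1

lemma Rset_unique {j v w : Fin n} (hv : v ∈ Rset a j) (hw : w ∈ Rset a j)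
    (hcl : strongClass a v = strongClass a w) : v = w := by
  classical
  have h1 := (mem_filter.mp hv).2.2
  have h2 := (mem_filter.mp hw).2.2
  rw [h1, h2, hcl]

lemma Rset_reach (j : Fin n) : ∀ v, ∃ r ∈ Rset a j, Reach a r v := by
  classical
  intro v
  obtain ⟨r0, hr0, hreach⟩ := exists_basis_reach (a := a) v
  set r := repv a j (strongClass a r0) with hr
  have hmem : r ∈ strongClass a r0 := repv_mem hr0
  have hcl : strongClass a r = strongClass a r0 := strongClass_eq_of_mem hmem
  refine ⟨r, ?_, hmem.1.trans hreach⟩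
  simp only [Rset, mem_filter, mem_univ, true_and]
  exact ⟨hcl ▸ hr0, by rw [hcl, ← hr]⟩

end ClassLemmas

section Construction
variable {a : Matrix (Fin n) (Fin n) ℝ}

/-- The vertex set of a tree rooted at `j`. -/
def verts (T : Finset (Fin n × Fin n)) (j : Fin n) : Finset (Fin n) :=
  insert j (T.image Prod.snd)

lemma tree_lemma {j i : Fin n} (h : Reach a j i) :
    ∃ T : Finset (Fin n × Fin n), IsOutForest a T ∧ (∀ e ∈ T, e.1 ∈ verts T j) ∧
      (∀ v ∈ verts T j, Relation.ReflTransGen (frel T) j v) ∧ i ∈ verts T j ∧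
      (∀ u, (u, j) ∉ T) := by
  induction h with
  | refl =>
    refine ⟨∅, ⟨by simp, by simp, ?_⟩, by simp, ?_, by simp [verts], by simp⟩
    · rintro ⟨f, hf⟩; exact Finset.notMem_empty _ (hf 0)
    · intro v hv
      simp only [verts, image_empty, mem_insert, notMem_empty, or_false] at hv
      subst hv; exact .refl
  | @tail c i' hjc hci' ih =>
    obtain ⟨T, hF, hstart, hpaths, hc, hnoj⟩ := ih
    by_cases hi' : i' ∈ verts T j
    · exact ⟨T, hF, hstart, hpaths, hi', hnoj⟩
    · have hji' : i' ≠ j := fun h => hi' (by rw [h]; exact mem_insert_self j _)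
      have himg : ∀ u', (u', i') ∈ T → False := fun u' h =>
        hi' (mem_insert_of_mem (mem_image_of_mem Prod.snd h))
      have verts_eq : verts (insert (c, i') T) j = insert i' (verts T j) := by
        simp only [verts, Finset.image_insert]
        exact Finset.insert_comm _ _ _
      have hnotpath : ¬ Relation.ReflTransGen (frel T) i' c := by
        intro hp
        rcases hp.cases_head with rfl | ⟨z, hz, _⟩
        · exact hi' hc
        · exact hi' (hstart (i', z) hz)
      refine ⟨insert (c, i') T, ⟨?_, ?_, ?_⟩, ?_, ?_, ?_, ?_⟩
      · intro e he
        rcases mem_insert.mp he with rfl | he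
        · exact hci'
        · exact hF.1 e he
      · intro u u' v h1 h2
        simp only [mem_insert, Prod.mk.injEq] at h1 h2
        rcases h1 with ⟨h1a, h1b⟩ | h1
        · rcases h2 with ⟨h2a, h2b⟩ | h2
          · rw [h1a, h2a]
          · exact absurd (h1b ▸ h2) (fun h => himg u' h)
        · rcases h2 with ⟨h2a, h2b⟩ | h2
          · exact absurd (h2b ▸ h1) (fun h => himg u h)
          · exact hF.2.1 u u' v h1 h2
      · exact noWalk_of_acyc ((frel_insert c i' T) ▸ acyc_insert hF.acyc hnotpath)
      · intro e he
        rw [verts_eq]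
        rcases mem_insert.mp he with rfl | he
        · exact mem_insert_of_mem hc
        · exact mem_insert_of_mem (hstart e he)
      · intro v hv
        rw [verts_eq] at hv
        have hmono : ∀ p q : Fin n, frel T p q → frel (insert (c, i') T) p q :=
          fun p q h => mem_insert_of_mem h
        rcases mem_insert.mp hv with rfl | hv
        · exact (ReflTransGen.mono hmono _ _ (hpaths c hc)).tail (mem_insert_self _ _)
        · exact ReflTransGen.mono hmono _ _ (hpaths v hv)
      · rw [verts_eq]; exact mem_insert_self _ _
      · intro u hu
        rcases mem_insert.mp hu with h | h
        · exact hji' (congrArg Prod.snd h).symm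
        · exact hnoj u h

lemma grow_lemma {R : Finset (Fin n)} (hRreach : ∀ v, ∃ r ∈ R, Reach a r v) :
    ∀ m (C : Finset (Fin n)) (G : Finset (Fin n × Fin n)), (univ \ C).card ≤ m → R ⊆ C →
      IsOutForest a G → (∀ e ∈ G, e.1 ∈ C ∧ e.2 ∈ C) → (∀ v ∈ C, v ∉ R → ∃ u, (u, v) ∈ G) →
      ∃ G', IsOutForest a G' ∧ G ⊆ G' ∧ (∀ e ∈ G', e ∈ G ∨ e.2 ∉ C) ∧
        (∀ v, v ∉ R → ∃ u, (u, v) ∈ G') := by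
  intro m
  induction m with
  | zero =>
    intro C G hm hRC hG harcs hpar
    have hC : univ ⊆ C := by
      rw [← Finset.sdiff_eq_empty_iff_subset]
      exact Finset.card_eq_zero.mp (le_antisymm hm (Nat.zero_le _))
    exact ⟨G, hG, subset_rfl, fun e he => Or.inl he, fun v hv => hpar v (hC (mem_univ v)) hv⟩
  | succ m ih =>
    intro C G hm hRC hG harcs hpar
    by_cases hCu : univ ⊆ C
    · exact ⟨G, hG, subset_rfl, fun e he => Or.inl he, fun v hv => hpar v (hCu (mem_univ v)) hv⟩
    · have hvex : ∃ v, v ∉ C := by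
        by_contra h
        push_neg at h
        exact hCu fun x _ => h x
      obtain ⟨v, hv⟩ := hvex
      obtain ⟨r, hrR, hreach⟩ := hRreach v
      obtain ⟨x, y, hxy, hx, hy⟩ := cross_lemma (P := (· ∉ C)) hreach hv (not_not_intro (hRC hrR))
      rw [not_not] at hx
      have hyCnot : ∀ e ∈ G, e.2 ≠ y := fun e he h => hy (h ▸ (harcs e he).2)
      have hnotpath : ¬ Relation.ReflTransGen (frel G) y x := by
        intro hp
        rcases hp.cases_head with rfl | ⟨z, hz, _⟩
        · exact hy hx
        · exact hy (harcs (y, z) hz).1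
      have hG1 : IsOutForest a (insert (x, y) G) := by
        refine ⟨?_, ?_, ?_⟩
        · intro e he
          rcases mem_insert.mp he with rfl | he
          · exact hxy
          · exact hG.1 e he
        · intro u u' w h1 h2
          simp only [mem_insert, Prod.mk.injEq] at h1 h2
          rcases h1 with ⟨h1a, h1b⟩ | h1
          · rcases h2 with ⟨h2a, h2b⟩ | h2
            · rw [h1a, h2a]
            · exact absurd h1b (hyCnot (u', w) h2)
          · rcases h2 with ⟨h2a, h2b⟩ | h2
            · exact absurd h2b (hyCnot (u, w) h1)
            · exact hG.2.1 u u' w h1 h2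
        · exact noWalk_of_acyc ((frel_insert x y G) ▸ acyc_insert hG.acyc hnotpath)
      have hmeas : (univ \ insert y C).card ≤ m := by
        have h1 : univ \ insert y C = (univ \ C).erase y := by
          ext z
          simp only [mem_sdiff, mem_insert, mem_erase, mem_univ, true_and]
          tauto
        have h2 : y ∈ univ \ C := by simp [hy]
        rw [h1, Finset.card_erase_of_mem h2]
        omega
      obtain ⟨G', hG', hsub, hnew, hpar'⟩ := ih (insert y C) (insert (x, y) G) hmeas
        (hRC.trans (Finset.subset_insert _ _)) hG1
        (by
          intro e he
          rcases mem_insert.mp he with rfl | he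
          · exact ⟨mem_insert_of_mem hx, mem_insert_self _ _⟩
          · exact ⟨mem_insert_of_mem (harcs e he).1, mem_insert_of_mem (harcs e he).2⟩)
        (by
          intro w hw hwR
          rcases mem_insert.mp hw with rfl | hw
          · exact ⟨x, mem_insert_self _ _⟩
          · obtain ⟨u, hu⟩ := hpar w hw hwR
            exact ⟨u, mem_insert_of_mem hu⟩)
      refine ⟨G', hG', (Finset.subset_insert _ _).trans hsub, ?_, hpar'⟩
      intro e he
      rcases hnew e he with he1 | he1
      · rcases mem_insert.mp he1 with rfl | he1
        · exact Or.inr hy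
        · exact Or.inl he1
      · exact Or.inr fun h => he1 (mem_insert_of_mem h)

end Construction

section Key
variable {a : Matrix (Fin n) (Fin n) ℝ}

open Classical in
lemma key_lemma {j : Fin n} :
    ∀ m (F : Finset (Fin n × Fin n)), IsOutForest a F → (∀ u, (u, j) ∉ F) →
      (∃ u, Reach a u j ∧ ¬ Reach a j u) →
      (univ.filter fun x => Relation.ReflTransGen (frel F) j x).card ≤ m →
      ∃ F', IsOutForest a F' ∧ F'.card = F.card + 1 := by
  intro m
  induction m with
  | zero =>
    intro F hF hroot hu hm
    exfalso
    have : j ∈ univ.filter fun x => Relation.ReflTransGen (frel F) j x := by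
      simp only [mem_filter, mem_univ, true_and]; exact .refl
    have := Finset.card_pos.mpr ⟨j, this⟩
    omega
  | succ m ih =>
    rintro F hF hroot ⟨u, huj, hju⟩ hm
    set T := univ.filter fun x => Relation.ReflTransGen (frel F) j x with hT
    have hjT : j ∈ T := by
      simp only [hT, mem_filter, mem_univ, true_and]; exact .refl
    have huT : u ∉ T := fun h => hju (frel_le_reach hF (mem_filter.mp h).2)
    obtain ⟨x, y, hxy, hxT, hyT⟩ := cross_lemma (P := (· ∈ T)) huj hjT huT
    have hyPath : Relation.ReflTransGen (frel F) j y := (mem_filter.mp hyT).2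
    have hxPath : ¬ Relation.ReflTransGen (frel F) j x :=
      fun h => hxT (mem_filter.mpr ⟨mem_univ x, h⟩)
    by_cases hyj : y = j
    · subst hyj
      have hnotin : (x, y) ∉ F := hroot x
      refine ⟨insert (x, y) F, ⟨?_, ?_, ?_⟩, Finset.card_insert_of_notMem hnotin⟩
      · intro e he
        rcases mem_insert.mp he with rfl | he
        · exact hxy
        · exact hF.1 e he
      · intro p p' v h1 h2
        simp only [mem_insert, Prod.mk.injEq] at h1 h2
        rcases h1 with ⟨h1a, h1b⟩ | h1
        · rcases h2 with ⟨h2a, h2b⟩ | h2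
          · rw [h1a, h2a]
          · exact absurd (h1b ▸ h2) (hroot p')
        · rcases h2 with ⟨h2a, h2b⟩ | h2
          · exact absurd (h2b ▸ h1) (hroot p)
          · exact hF.2.1 p p' v h1 h2
      · exact noWalk_of_acyc ((frel_insert x y F) ▸ acyc_insert hF.acyc hxPath)
    · obtain ⟨q, hjq, hqy⟩ : ∃ q, Relation.ReflTransGen (frel F) j q ∧ (q, y) ∈ F := by
        rcases hyPath.cases_tail with h | ⟨q, h1, h2⟩
        · exact absurd h hyj
        · exact ⟨q, h1, h2⟩
      have hqT : q ∈ T := mem_filter.mpr ⟨mem_univ q, hjq⟩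
      have hxq : x ≠ q := fun h => hxT (h ▸ hqT)
      have hxyE : (x, y) ∉ F.erase (q, y) := by
        intro h
        exact hxq (hF.2.1 x q y (Finset.mem_of_mem_erase h) hqy)
      set F2 := insert (x, y) (F.erase (q, y)) with hF2def
      have hcard : F2.card = F.card := by
        rw [hF2def, Finset.card_insert_of_notMem hxyE, Finset.card_erase_of_mem hqy]
        have : 0 < F.card := Finset.card_pos.mpr ⟨(q, y), hqy⟩
        omega
      have heraseAcyc : ∀ z, ¬ Relation.TransGen (frel (F.erase (q, y))) z z := by
        intro z hz
        exact hF.acyc z (TransGen.mono (fun p q h => Finset.mem_of_mem_erase h) _ _ hz)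
      have hnotpath : ¬ Relation.ReflTransGen (frel (F.erase (q, y))) y x := by
        intro hp
        exact hxPath (hyPath.trans (ReflTransGen.mono (fun p q h => Finset.mem_of_mem_erase h) _ _ hp))
      have hF2 : IsOutForest a F2 := by
        refine ⟨?_, ?_, ?_⟩
        · intro e he
          rcases mem_insert.mp he with rfl | he
          · exact hxy
          · exact hF.1 e (Finset.mem_of_mem_erase he)
        · intro p p' v h1 h2
          simp only [hF2def, mem_insert, Prod.mk.injEq] at h1 h2
          rcases h1 with ⟨h1a, h1b⟩ | h1
          · rcases h2 with ⟨h2a, h2b⟩ | h2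
            · rw [h1a, h2a]
            · exfalso
              subst h1b
              have heq : p' = q := hF.2.1 p' q _ (Finset.mem_of_mem_erase h2) hqy
              subst heq
              exact Finset.notMem_erase (p', _) F h2
          · rcases h2 with ⟨h2a, h2b⟩ | h2
            · exfalso
              subst h2b
              have heq : p = q := hF.2.1 p q _ (Finset.mem_of_mem_erase h1) hqy
              subst heq
              exact Finset.notMem_erase (p, _) F h1
            · exact hF.2.1 p p' v (Finset.mem_of_mem_erase h1) (Finset.mem_of_mem_erase h2)
        · exact noWalk_of_acyc
            ((frel_insert x y (F.erase (q, y))) ▸ acyc_insert heraseAcyc hnotpath)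
      have hroot2 : ∀ p, (p, j) ∉ F2 := by
        intro p hp
        rcases mem_insert.mp hp with h | h
        · exact hyj (congrArg Prod.snd h).symm
        · exact hroot p (Finset.mem_of_mem_erase h)
      have claim : ∀ z, Relation.ReflTransGen (frel F2) j z →
          Relation.ReflTransGen (frel F) j z ∧ z ≠ y := by
        intro z hz
        induction hz with
        | refl => exact ⟨.refl, fun h => hyj h.symm⟩
        | @tail p z hjp hpz ihz =>
          obtain ⟨hp, hpy⟩ := ihz
          rcases mem_insert.mp hpz with h | h
          · exfalso
            have hpx : p = x := (congrArg Prod.fst h)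
            exact hxPath (hpx ▸ hp)
          · have hzF : (p, z) ∈ F := Finset.mem_of_mem_erase h
            refine ⟨hp.tail hzF, ?_⟩
            rintro rfl
            have : p = q := hF.2.1 p q z hzF hqy
            exact Finset.notMem_erase (q, z) F (this ▸ h)
      have hmeas : (univ.filter fun x => Relation.ReflTransGen (frel F2) j x).card ≤ m := by
        have hsub : (univ.filter fun x => Relation.ReflTransGen (frel F2) j x) ⊆ T.erase y := by
          intro z hz
          obtain ⟨h1, h2⟩ := claim z (mem_filter.mp hz).2
          exact Finset.mem_erase.mpr ⟨h2, mem_filter.mpr ⟨mem_univ z, h1⟩⟩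
        have := Finset.card_le_card hsub
        rw [Finset.card_erase_of_mem hyT] at this
        have hTpos : 0 < T.card := Finset.card_pos.mpr ⟨j, hjT⟩
        omega
      obtain ⟨F', hF', hc⟩ := ih F2 hF2 hroot2 ⟨u, huj, hju⟩ hmeas
      exact ⟨F', hF', by rw [hc, hcard]⟩

end Key

section Main
variable {a : Matrix (Fin n) (Fin n) ℝ}

lemma empty_outForest : IsOutForest a ∅ :=
  ⟨by simp, by simp, by rintro ⟨f, hf⟩; exact Finset.notMem_empty _ (hf 0)⟩

lemma bddAbove_sizes : BddAbove {k | ∃ F, IsOutForest a F ∧ F.card = k} := by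
  refine ⟨Fintype.card (Fin n × Fin n), ?_⟩
  rintro k ⟨F, _, rfl⟩
  exact le_trans (Finset.card_le_univ F) (le_of_eq Finset.card_univ)

lemma exists_maxForest : ∃ F, IsOutForest a F ∧ F.card = maxForestSize a := by
  have h := Nat.sSup_mem (s := {k | ∃ F, IsOutForest a F ∧ F.card = k})
    ⟨0, ⟨∅, empty_outForest, rfl⟩⟩ bddAbove_sizes
  exact h

lemma card_le_maxForestSize {F : Finset (Fin n × Fin n)} (h : IsOutForest a F) :
    F.card ≤ maxForestSize a :=
  le_csSup bddAbove_sizes ⟨F, h, rfl⟩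

lemma mem_maxForests {F : Finset (Fin n × Fin n)} :
    F ∈ maxForests a ↔ IsOutForest a F ∧ F.card = maxForestSize a := by
  classical
  simp [maxForests]

lemma maxForests_nonempty : (maxForests a).Nonempty := by
  obtain ⟨F, h1, h2⟩ := exists_maxForest
  exact ⟨F, mem_maxForests.mpr ⟨h1, h2⟩⟩

lemma forestWeight_pos {F : Finset (Fin n × Fin n)} (h : IsOutForest a F) :
    0 < forestWeight a F :=
  Finset.prod_pos fun e he => h.1 e he

lemma barJ_ne_zero_iff_exists (i j : Fin n) :
    barJ a i j ≠ 0 ↔ ∃ F ∈ maxForests a, InTreeRootedAt F j i := by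
  classical
  have hden : 0 < ∑ F ∈ maxForests a, forestWeight a F :=
    Finset.sum_pos (fun F hF => forestWeight_pos (mem_maxForests.mp hF).1) maxForests_nonempty
  simp only [barJ, Matrix.of_apply]
  rw [div_ne_zero_iff]
  constructor
  · rintro ⟨hnum, _⟩
    by_contra h
    push_neg at h
    apply hnum
    rw [Finset.filter_eq_empty_iff.mpr (fun F hF => h F hF), Finset.sum_empty]
  · rintro ⟨F, hF, hFT⟩
    refine ⟨ne_of_gt (Finset.sum_pos ?_ ⟨F, mem_filter.mpr ⟨hF, hFT⟩⟩), ne_of_gt hden⟩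
    intro F' hF'
    exact forestWeight_pos (mem_maxForests.mp (mem_filter.mp hF').1).1


/-- `J̄_{ij} ≠ 0` iff `j` belongs to some basis bicomponent and `i` is reachable
from `j` by a directed path. -/
theorem barJ_ne_zero_iff {n : ℕ} (a : Matrix (Fin n) (Fin n) ℝ)
    (hnn : ∀ i j, 0 ≤ a i j) (i j : Fin n) :
    barJ a i j ≠ 0 ↔ ((∃ S ∈ basisClasses a, j ∈ S) ∧ Reach a j i) := by
  classical
  rw [barJ_ne_zero_iff_exists]
  constructor
  · rintro ⟨F, hFmax, hroot, hpath⟩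
    obtain ⟨hF, hFcard⟩ := mem_maxForests.mp hFmax
    refine ⟨⟨strongClass a j, ⟨⟨j, rfl⟩, ?_⟩, mem_strongClass_self j⟩, frel_le_reach hF hpath⟩
    intro u v hu hv harc
    have huj : Reach a u j := Relation.ReflTransGen.head harc hv.1
    have hju : ¬ Reach a j u := fun h => hu ⟨huj, h⟩
    obtain ⟨F', hF', hc⟩ := key_lemma n F hF hroot ⟨u, huj, hju⟩
      (le_trans (Finset.card_filter_le _ _) (by simp))
    have hle := card_le_maxForestSize hF'
    omega
  · rintro ⟨⟨S, hS, hjS⟩, hreach⟩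
    have hSj : S = strongClass a j := by
      obtain ⟨v, hv⟩ := hS.1
      rw [hv] at hjS ⊢
      exact (strongClass_eq_of_mem hjS).symm
    have hj : strongClass a j ∈ basisClasses a := hSj ▸ hS
    obtain ⟨T, hT, hstart, hpaths, hiT, hnoj⟩ := tree_lemma hreach
    have hjR : j ∈ Rset a j := mem_Rset j hj
    set C := verts T j ∪ Rset a j with hC
    obtain ⟨G, hG, hTG, hnew, hpar⟩ := grow_lemma (Rset_reach j) n C T
      (le_trans (Finset.card_le_univ _) (by simp))
      Finset.subset_union_right hT
      (by
        intro e he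
        refine ⟨Finset.mem_union_left _ (hstart e he), Finset.mem_union_left _ ?_⟩
        exact mem_insert_of_mem (mem_image_of_mem Prod.snd he))
      (by
        intro v hvC hvR
        rcases Finset.mem_union.mp hvC with hv | hv
        · rcases mem_insert.mp hv with rfl | hv
          · exact absurd hjR hvR
          · obtain ⟨e, he, rfl⟩ := Finset.mem_image.mp hv
            exact ⟨e.1, by rwa [Prod.mk.eta]⟩
        · exact absurd hv hvR)
    have hGroot : ∀ u, (u, j) ∉ G := by
      intro u hu
      rcases hnew (u, j) hu with h | h
      · exact hnoj u h
      · exact h (Finset.mem_union_left _ (mem_insert_self j _))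
    have hGpath : Relation.ReflTransGen (frel G) j i :=
      ReflTransGen.mono (fun p q h => hTG h) _ _ (hpaths i hiT)
    have hmax : ∀ F' : Finset (Fin n × Fin n), IsOutForest a F' → F'.card ≤ G.card := by
      intro F' hF'
      have h1 := card_add_rootSet_card hF'
      have h2 := card_add_rootSet_card hG
      choose φ hφroot hφpath using fun r : Fin n => exists_root hF' r
      have hmaps : ∀ r ∈ Rset a j, φ r ∈ rootSet F' := fun r _ => hφroot r
      have hinj : Set.InjOn φ (Rset a j : Set (Fin n)) := by
        intro r hr r' hr' heq
        have hb : strongClass a r ∈ basisClasses a := Rset_basis hr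
        have hb' : strongClass a r' ∈ basisClasses a := Rset_basis hr'
        have hm : φ r ∈ strongClass a r :=
          basis_reach_closed hb (frel_le_reach hF' (hφpath r)) (mem_strongClass_self r)
        have hm' : φ r' ∈ strongClass a r' :=
          basis_reach_closed hb' (frel_le_reach hF' (hφpath r')) (mem_strongClass_self r')
        have hcl : strongClass a r = strongClass a r' := by
          rw [← strongClass_eq_of_mem hm, ← strongClass_eq_of_mem hm', heq]
        exact Rset_unique hr hr' hcl
      have hRF : (Rset a j).card ≤ (rootSet F').card :=
        Finset.card_le_card_of_injOn φ hmaps hinj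
      have hGR : rootSet G ⊆ Rset a j := by
        intro v hv
        by_contra hvR
        obtain ⟨u, hu⟩ := hpar v hvR
        exact (mem_filter.mp hv).2 u hu
      have hGRcard := Finset.card_le_card hGR
      omega
    have hGcard : G.card = maxForestSize a := by
      obtain ⟨Fm, hFm, hFmc⟩ := exists_maxForest
      exact le_antisymm (card_le_maxForestSize hG) (hFmc ▸ hmax Fm hFm)
    exact ⟨G, mem_maxForests.mpr ⟨hG, hGcard⟩, hGroot, hGpath⟩

end Main
end

section
/- For a row stochastic matrix P = I − εL with ε > 0, where L is the Kirchhoff matrix of a weighted digraph Γ, the Cesàro limit P^∞ = lim_{m→∞} (1/m) Σ_{i=1}^m P^i exists and equals the normalized matrix of maximum out-forests J̄ of Γ (Markov chain tree theorem). -/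
set_option maxHeartbeats 1000000


open Finset

variable {n : ℕ}

/-! ### Auxiliary development for the proof -/

namespace MCTT

variable {n : ℕ}

/-- Arc relation of a finset of arcs. -/
def Arc (F : Finset (Fin n × Fin n)) (x y : Fin n) : Prop := (x, y) ∈ F

/-- Reachability in `F`. -/
def Rg (F : Finset (Fin n × Fin n)) : Fin n → Fin n → Prop :=
  Relation.ReflTransGen (Arc F)

/-- Acyclicity. -/
def Acyc (F : Finset (Fin n × Fin n)) : Prop :=
  ∀ x, ¬ Relation.TransGen (Arc F) x x

theorem rg_mono {F G : Finset (Fin n × Fin n)} (h : F ⊆ G) {x y : Fin n}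
    (hxy : Rg F x y) : Rg G x y :=
  Relation.ReflTransGen.mono (p := Arc G) (fun _ _ hx => h hx) _ _ hxy

/-- From a cyclic `TransGen` we get an infinite walk. -/
theorem exists_walk_of_transGen_cycle {F : Finset (Fin n × Fin n)} {x : Fin n}
    (h : Relation.TransGen (Arc F) x x) :
    ∃ f : ℕ → Fin n, ∀ k, (f k, f (k + 1)) ∈ F := by
  classical
  -- set of points on a cycle through x
  let S : Set (Fin n) := {y | Rg F x y ∧ Rg F y x}
  have hxS : x ∈ S := ⟨Relation.ReflTransGen.refl, Relation.ReflTransGen.refl⟩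
  -- every point of S has a successor in S
  have hstep : ∀ y ∈ S, ∃ z, (y, z) ∈ F ∧ z ∈ S := by
    intro y hy
    rcases hy with ⟨hxy, hyx⟩
    -- combine hyx and h to get TransGen y y ... we get a step
    have hyy : Relation.TransGen (Arc F) y y := by
      rcases (Relation.reflTransGen_iff_eq_or_transGen.mp hyx) with h1 | h1
      · exact h1 ▸ h
      · rcases (Relation.reflTransGen_iff_eq_or_transGen.mp hxy) with h2 | h2
        · exact h2 ▸ h1
        · exact h1.trans h2
    rcases Relation.TransGen.head'_iff.mp hyy with ⟨z, hyz, hzy⟩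
    exact ⟨z, hyz, ⟨hxy.trans (Relation.ReflTransGen.single hyz), hzy.trans hyx⟩⟩
  choose! nxt hnxt1 hnxt2 using hstep
  set g : ℕ → Fin n := fun k => Nat.rec x (fun _ y => nxt y) k with hg
  have hmem : ∀ k, g k ∈ S := by
    intro k
    induction k with
    | zero => exact hxS
    | succ k ih => exact hnxt2 _ ih
  exact ⟨g, fun k => hnxt1 _ (hmem k)⟩

theorem acyc_iff {F : Finset (Fin n × Fin n)} :
    (¬ ∃ f : ℕ → Fin n, ∀ k, (f k, f (k + 1)) ∈ F) ↔ Acyc F := by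
  constructor
  · intro h x hx
    exact h (exists_walk_of_transGen_cycle hx)
  · rintro h ⟨f, hf⟩
    -- pigeonhole
    obtain ⟨s, t, hst, he⟩ := Finite.exists_ne_map_eq_of_infinite f
    -- wlog s < t
    have key : ∀ u v : ℕ, u < v → f u = f v → False := by
      intro u v huv heq
      apply h (f u)
      have : ∀ m : ℕ, Relation.TransGen (Arc F) (f u) (f (u + m + 1)) := by
        intro m
        induction m with
        | zero => exact Relation.TransGen.single (hf u)
        | succ m ih => exact ih.tail (hf (u + m + 1))
      have h2 := this (v - u - 1)
      have hv : u + (v - u - 1) + 1 = v := by omega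
      rw [hv] at h2
      exact heq ▸ h2
    rcases lt_or_gt_of_ne hst with hlt | hlt
    · exact key s t hlt he
    · exact key t s hlt he.symm

theorem acyc_of_forest {a : Matrix (Fin n) (Fin n) ℝ} {F : Finset (Fin n × Fin n)}
    (h : IsOutForest a F) : Acyc F := acyc_iff.mp h.2.2

theorem forest_of_subset {a : Matrix (Fin n) (Fin n) ℝ} {F G : Finset (Fin n × Fin n)}
    (h : IsOutForest a G) (hFG : F ⊆ G) : IsOutForest a F := by
  refine ⟨fun e he => h.1 e (hFG he), fun u u' v h1 h2 => h.2.1 u u' v (hFG h1) (hFG h2), ?_⟩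
  rw [acyc_iff]
  intro x hx
  exact acyc_of_forest h x (Relation.TransGen.mono (p := Arc G) (fun _ _ hx' => hFG hx') _ _ hx)

theorem not_selfloop {F : Finset (Fin n × Fin n)} (h : Acyc F) (v : Fin n) :
    (v, v) ∉ F := fun hv => h v (Relation.TransGen.single hv)

/-- Decomposition of reachability after adding the arc `(p, i)`. -/
theorem rg_insert_decomp {F : Finset (Fin n × Fin n)} {p i u v : Fin n}
    (h : Rg (insert (p, i) F) u v) :
    Rg F u v ∨ (Rg F u p ∧ Rg (insert (p, i) F) i v) := by
  induction h with
  | refl => exact Or.inl Relation.ReflTransGen.refl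
  | @tail w v hw hwv ih =>
    rcases Finset.mem_insert.mp hwv with he | he
    · have hw' : w = p := congrArg Prod.fst he
      have hv' : v = i := congrArg Prod.snd he
      subst hw'; subst hv'
      rcases ih with h1 | h1
      · exact Or.inr ⟨h1, Relation.ReflTransGen.refl⟩
      · exact Or.inr ⟨h1.1, Relation.ReflTransGen.refl⟩
    · rcases ih with h1 | h1
      · exact Or.inl (h1.tail he)
      · exact Or.inr ⟨h1.1, h1.2.tail (Finset.mem_insert_of_mem he)⟩

/-- Decomposition of reachability after erasing an arc `(q, i)` (into `i`). -/
theorem rg_erase_decomp {F : Finset (Fin n × Fin n)} {q i u v : Fin n}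
    (h : Rg F u v) :
    Rg (F.erase (q, i)) u v ∨ Rg (F.erase (q, i)) i v := by
  classical
  induction h with
  | refl => exact Or.inl Relation.ReflTransGen.refl
  | @tail w v hw hwv ih =>
    by_cases he : (w, v) = (q, i)
    · have : v = i := congrArg Prod.snd he
      subst this
      exact Or.inr Relation.ReflTransGen.refl
    · have hm : (w, v) ∈ F.erase (q, i) := Finset.mem_erase.mpr ⟨he, hwv⟩
      rcases ih with h1 | h1
      · exact Or.inl (h1.tail hm)
      · exact Or.inr (h1.tail hm)

theorem acyc_insert {F : Finset (Fin n × Fin n)} {p i : Fin n}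
    (hF : Acyc F) (hip : ¬ Rg F i p) : Acyc (insert (p, i) F) := by
  intro x hx
  apply hip
  rcases Relation.TransGen.head'_iff.mp hx with ⟨y, hxy, hyx⟩
  rcases rg_insert_decomp hyx with h1 | h1
  · rcases Finset.mem_insert.mp hxy with he | he
    · have hx' : x = p := congrArg Prod.fst he
      have hy' : y = i := congrArg Prod.snd he
      subst hx'; subst hy'
      exact h1
    · exact absurd (Relation.TransGen.head' he h1) (hF x)
  · rcases Finset.mem_insert.mp hxy with he | he
    · have hx' : x = p := congrArg Prod.fst he
      have hy' : y = i := congrArg Prod.snd he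
      subst hx'; subst hy'
      exact h1.1.trans Relation.ReflTransGen.refl
    · -- x→y in F, y ⇝_F p, i ⇝_G x
      have hxp : Rg F x p := Relation.ReflTransGen.head he h1.1
      rcases rg_insert_decomp h1.2 with h2 | h2
      · exact h2.trans hxp
      · exact h2.1

theorem rg_cases_tail {F : Finset (Fin n × Fin n)} {x y : Fin n} (h : Rg F x y) :
    y = x ∨ ∃ w, Rg F x w ∧ (w, y) ∈ F := Relation.ReflTransGen.cases_tail h

theorem acyc_wf {F : Finset (Fin n × Fin n)} (h : Acyc F) :
    WellFounded (Relation.TransGen (Arc F)) := by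
  haveI : IsTrans (Fin n) (Relation.TransGen (Arc F)) := ⟨fun _ _ _ h1 h2 => h1.trans h2⟩
  haveI : IsIrrefl (Fin n) (Relation.TransGen (Arc F)) := ⟨h⟩
  exact Finite.wellFounded_of_trans_of_irrefl _

/-- Unique in-arcs of a forest. -/
theorem uniq {a : Matrix (Fin n) (Fin n) ℝ} {F : Finset (Fin n × Fin n)}
    (hF : IsOutForest a F) {u u' v : Fin n} (h1 : (u, v) ∈ F) (h2 : (u', v) ∈ F) : u = u' :=
  hF.2.1 u u' v h1 h2

/-- Ancestor comparability in a forest. -/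
theorem rg_comparable {a : Matrix (Fin n) (Fin n) ℝ} {F : Finset (Fin n × Fin n)}
    (hF : IsOutForest a F) {x y p : Fin n} (hx : Rg F x p) (hy : Rg F y p) :
    Rg F x y ∨ Rg F y x := by
  have hac := acyc_of_forest hF
  induction p using (acyc_wf hac).induction with
  | _ p ih =>
    rcases rg_cases_tail hx with rfl | ⟨w, hxw, hwp⟩
    · exact Or.inr hy
    · rcases rg_cases_tail hy with rfl | ⟨w', hyw, hwp'⟩
      · exact Or.inl hx
      · have : w' = w := uniq hF hwp' hwp
        rw [this] at hyw
        exact ih w (Relation.TransGen.single hwp) hxw hyw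

/-- Two roots that reach a common vertex coincide. -/
theorem root_unique {a : Matrix (Fin n) (Fin n) ℝ} {F : Finset (Fin n × Fin n)}
    (hF : IsOutForest a F) {x y p : Fin n} (hxr : ∀ u, (u, x) ∉ F) (hyr : ∀ u, (u, y) ∉ F)
    (hx : Rg F x p) (hy : Rg F y p) : x = y := by
  rcases rg_comparable hF hx hy with h | h
  · rcases rg_cases_tail h with rfl | ⟨w, _, hwy⟩
    · rfl
    · exact absurd hwy (hyr w)
  · rcases rg_cases_tail h with rfl | ⟨w, _, hwx⟩
    · rfl
    · exact absurd hwx (hxr w)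

open Classical in
/-- Parent of `i` in `F` (junk if none). -/
noncomputable def par (F : Finset (Fin n × Fin n)) (i : Fin n) : Fin n :=
  if h : ∃ u, (u, i) ∈ F then h.choose else i

theorem par_mem {F : Finset (Fin n × Fin n)} {i : Fin n} (h : ∃ u, (u, i) ∈ F) :
    (par F i, i) ∈ F := by
  rw [par, dif_pos h]
  exact h.choose_spec

theorem par_eq {a : Matrix (Fin n) (Fin n) ℝ} {F : Finset (Fin n × Fin n)}
    (hF : IsOutForest a F) {u i : Fin n} (h : (u, i) ∈ F) : par F i = u :=
  uniq hF (par_mem ⟨u, h⟩) h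

/-- A reachable non-root has an in-arc; combined with uniqueness we reach the parent. -/
theorem rg_to_parent {a : Matrix (Fin n) (Fin n) ℝ} {F : Finset (Fin n × Fin n)}
    (hF : IsOutForest a F) {j i q : Fin n} (h : Rg F j i) (hne : i ≠ j) (hq : (q, i) ∈ F) :
    Rg F j q := by
  rcases rg_cases_tail h with h' | ⟨w, hjw, hwi⟩
  · exact absurd h' hne
  · rwa [uniq hF hq hwi]

theorem no_cycle_arc {a : Matrix (Fin n) (Fin n) ℝ} {F : Finset (Fin n × Fin n)}
    (hF : IsOutForest a F) {q i : Fin n} (hq : (q, i) ∈ F) (h : Rg F i q) : False := by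
  have : Relation.TransGen (Arc F) i i := by
    rcases (Relation.reflTransGen_iff_eq_or_transGen.mp h) with rfl | h'
    · exact Relation.TransGen.single hq
    · exact h'.tail hq
  exact acyc_of_forest hF i this

/-- Inserting an arc `(p, i)` into a forest where `i` is a root and `p` is not below `i`. -/
theorem forest_insert {a : Matrix (Fin n) (Fin n) ℝ} {F : Finset (Fin n × Fin n)}
    {p i : Fin n} (hF : IsOutForest a F) (hap : 0 < a i p) (hroot : ∀ u, (u, i) ∉ F)
    (hip : ¬ Rg F i p) : IsOutForest a (insert (p, i) F) := by
  refine ⟨?_, ?_, ?_⟩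
  · intro e he
    rcases Finset.mem_insert.mp he with rfl | he
    · exact hap
    · exact hF.1 e he
  · intro u u' v h1 h2
    rcases Finset.mem_insert.mp h1 with he1 | he1 <;> rcases Finset.mem_insert.mp h2 with he2 | he2
    · rw [Prod.mk.injEq] at he1 he2; rw [he1.1, he2.1]
    · exfalso
      have : v = i := congrArg Prod.snd he1
      exact hroot u' (this ▸ he2)
    · exfalso
      have : v = i := congrArg Prod.snd he2
      exact hroot u (this ▸ he1)
    · exact hF.2.1 u u' v he1 he2
  · exact acyc_iff.mpr (acyc_insert (acyc_of_forest hF) hip)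

theorem arc_not_mem_of_root {F : Finset (Fin n × Fin n)} {p i : Fin n}
    (hroot : ∀ u, (u, i) ∉ F) : (p, i) ∉ F := hroot p

theorem rg_trans {F : Finset (Fin n × Fin n)} {x y z : Fin n} (h1 : Rg F x y)
    (h2 : Rg F y z) : Rg F x z := h1.trans h2

theorem inTree_iff {F : Finset (Fin n × Fin n)} {j i : Fin n} :
    InTreeRootedAt F j i ↔ (∀ u, (u, j) ∉ F) ∧ Rg F j i := Iff.rfl

open Classical in
/-- Forests with `k` arcs. -/
noncomputable def forestsK (a : Matrix (Fin n) (Fin n) ℝ) (k : ℕ) :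
    Finset (Finset (Fin n × Fin n)) :=
  Finset.univ.filter fun F => IsOutForest a F ∧ F.card = k

noncomputable def sigmaK (a : Matrix (Fin n) (Fin n) ℝ) (k : ℕ) : ℝ :=
  ∑ F ∈ forestsK a k, forestWeight a F

open Classical in
noncomputable def Jmat (a : Matrix (Fin n) (Fin n) ℝ) (k : ℕ) : Matrix (Fin n) (Fin n) ℝ :=
  Matrix.of fun i j =>
    ∑ F ∈ (forestsK a k).filter (fun F => InTreeRootedAt F j i), forestWeight a F

theorem mem_forestsK {a : Matrix (Fin n) (Fin n) ℝ} {k : ℕ} {F : Finset (Fin n × Fin n)} :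
    F ∈ forestsK a k ↔ IsOutForest a F ∧ F.card = k := by
  simp [forestsK]

theorem empty_forest (a : Matrix (Fin n) (Fin n) ℝ) : IsOutForest a (∅ : Finset (Fin n × Fin n)) := by
  refine ⟨by simp, by simp, ?_⟩
  rintro ⟨f, hf⟩
  exact absurd (hf 0) (by simp)

theorem forestSizes_nonempty (a : Matrix (Fin n) (Fin n) ℝ) :
    {k | ∃ F, IsOutForest a F ∧ F.card = k}.Nonempty :=
  ⟨0, ∅, empty_forest a, rfl⟩

theorem forestSizes_bdd (a : Matrix (Fin n) (Fin n) ℝ) :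
    BddAbove {k | ∃ F, IsOutForest a F ∧ F.card = k} := by
  refine ⟨Fintype.card (Fin n × Fin n), ?_⟩
  rintro k ⟨F, _, rfl⟩
  exact Finset.card_le_univ F

theorem exists_max_forest (a : Matrix (Fin n) (Fin n) ℝ) :
    ∃ F, IsOutForest a F ∧ F.card = maxForestSize a :=
  Nat.sSup_mem (forestSizes_nonempty a) (forestSizes_bdd a)

theorem card_le_max {a : Matrix (Fin n) (Fin n) ℝ} {F : Finset (Fin n × Fin n)}
    (hF : IsOutForest a F) : F.card ≤ maxForestSize a :=
  le_csSup (forestSizes_bdd a) ⟨F, hF, rfl⟩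

theorem forestsK_succ_max (a : Matrix (Fin n) (Fin n) ℝ) :
    forestsK a (maxForestSize a + 1) = ∅ := by
  rw [Finset.eq_empty_iff_forall_notMem]
  intro F hF
  rw [mem_forestsK] at hF
  have := card_le_max hF.1
  omega

theorem weight_pos {a : Matrix (Fin n) (Fin n) ℝ} {F : Finset (Fin n × Fin n)}
    (hF : IsOutForest a F) : 0 < forestWeight a F :=
  Finset.prod_pos fun e he => hF.1 e he

theorem sigma_max_pos (a : Matrix (Fin n) (Fin n) ℝ) : 0 < sigmaK a (maxForestSize a) := by
  obtain ⟨F, hF, hcard⟩ := exists_max_forest a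
  refine Finset.sum_pos (fun G hG => weight_pos (mem_forestsK.mp hG).1) ⟨F, ?_⟩
  rw [mem_forestsK]; exact ⟨hF, hcard⟩

theorem maxForests_eq (a : Matrix (Fin n) (Fin n) ℝ) :
    maxForests a = forestsK a (maxForestSize a) := by
  classical
  ext F
  simp [maxForests, forestsK]

theorem rg_empty {x y : Fin n} : Rg (∅ : Finset (Fin n × Fin n)) x y ↔ x = y := by
  constructor
  · intro h
    induction h with
    | refl => rfl
    | tail _ h2 _ => exact absurd h2 (by simp [Arc])
  · rintro rfl; exact Relation.ReflTransGen.refl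

theorem forestsK_zero (a : Matrix (Fin n) (Fin n) ℝ) :
    forestsK a 0 = {∅} := by
  ext F
  rw [mem_forestsK, Finset.mem_singleton, Finset.card_eq_zero]
  constructor
  · rintro ⟨_, rfl⟩; rfl
  · rintro rfl; exact ⟨empty_forest a, rfl⟩

theorem sigmaK_zero (a : Matrix (Fin n) (Fin n) ℝ) : sigmaK a 0 = 1 := by
  rw [sigmaK, forestsK_zero, Finset.sum_singleton, forestWeight, Finset.prod_empty]

theorem inTree_empty {j i : Fin n} : InTreeRootedAt (∅ : Finset (Fin n × Fin n)) j i ↔ j = i := by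
  rw [inTree_iff]
  rw [rg_empty]
  simp

theorem Jmat_zero (a : Matrix (Fin n) (Fin n) ℝ) : Jmat a 0 = 1 := by
  classical
  ext i j
  rw [Jmat, Matrix.of_apply, forestsK_zero, Matrix.one_apply]
  by_cases h : i = j
  · rw [Finset.filter_singleton, if_pos (inTree_empty.mpr h.symm), Finset.sum_singleton,
      forestWeight, Finset.prod_empty, if_pos h]
  · rw [Finset.filter_singleton, if_neg (fun hc => h (inTree_empty.mp hc).symm),
      Finset.sum_empty, if_neg h]

/-- Pairs `(F, p)` with `F` a `k`-arc forest and `p ≠ i`. -/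
noncomputable def pairsP (a : Matrix (Fin n) (Fin n) ℝ) (k : ℕ) (i : Fin n) :
    Finset (Finset (Fin n × Fin n) × Fin n) :=
  (forestsK a k) ×ˢ (Finset.univ.erase i)

/-- Weight of a pair. -/
noncomputable def wtF (a : Matrix (Fin n) (Fin n) ℝ) (i : Fin n)
    (x : Finset (Fin n × Fin n) × Fin n) : ℝ :=
  a i x.2 * forestWeight a x.1

theorem mem_pairsP {a : Matrix (Fin n) (Fin n) ℝ} {k : ℕ} {i : Fin n}
    {x : Finset (Fin n × Fin n) × Fin n} :
    x ∈ pairsP a k i ↔ (IsOutForest a x.1 ∧ x.1.card = k) ∧ x.2 ≠ i := by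
  rw [pairsP, Finset.mem_product, mem_forestsK, Finset.mem_erase]
  simp

/-- Generic "insert the arc `(p, i)`" weight-preserving bijection. -/
theorem sum_pairs_eq_sum_forests (a : Matrix (Fin n) (Fin n) ℝ) (k : ℕ) (i : Fin n)
    (Q : Finset (Fin n × Fin n) × Fin n → Prop) (T : Finset (Fin n × Fin n) → Prop)
    [DecidablePred Q] [DecidablePred T]
    (hQT : ∀ F p, (IsOutForest a F ∧ F.card = k) → p ≠ i → Q (F, p) →
      (0 < a i p ∧ (∀ u, (u, i) ∉ F) ∧ ¬ Rg F i p) ∧ T (insert (p, i) F))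
    (hTQ : ∀ G, (IsOutForest a G ∧ G.card = k + 1) → T G →
      (∃ u, (u, i) ∈ G) ∧ Q (G.erase (par G i, i), par G i)) :
    ∑ x ∈ (pairsP a k i).filter Q, wtF a i x
      = ∑ G ∈ (forestsK a (k + 1)).filter T, forestWeight a G := by
  refine Finset.sum_nbij' (fun x => insert (x.2, i) x.1)
    (fun G => (G.erase (par G i, i), par G i)) ?_ ?_ ?_ ?_ ?_
  · -- forward membership
    rintro ⟨F, p⟩ hx
    rw [Finset.mem_filter, mem_pairsP] at hx
    obtain ⟨⟨⟨hF, hcard⟩, hpi⟩, hQ⟩ := hx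
    obtain ⟨⟨hap, hroot, hnrg⟩, hT⟩ := hQT F p ⟨hF, hcard⟩ hpi hQ
    rw [Finset.mem_filter, mem_forestsK]
    exact ⟨⟨forest_insert hF hap hroot hnrg,
      by rw [Finset.card_insert_of_notMem (hroot p), hcard]⟩, hT⟩
  · -- backward membership
    intro G hG
    rw [Finset.mem_filter, mem_forestsK] at hG
    obtain ⟨⟨hG1, hG2⟩, hT⟩ := hG
    obtain ⟨hex, hQ⟩ := hTQ G ⟨hG1, hG2⟩ hT
    have hq : (par G i, i) ∈ G := par_mem hex
    rw [Finset.mem_filter, mem_pairsP]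
    dsimp only
    refine ⟨⟨⟨forest_of_subset hG1 (Finset.erase_subset _ _), ?_⟩, ?_⟩, hQ⟩
    · have := Finset.card_erase_add_one hq
      omega
    · intro h
      exact not_selfloop (acyc_of_forest hG1) i (by rwa [h] at hq)
  · -- left inverse
    rintro ⟨F, p⟩ hx
    rw [Finset.mem_filter, mem_pairsP] at hx
    obtain ⟨⟨⟨hF, hcard⟩, hpi⟩, hQ⟩ := hx
    obtain ⟨⟨hap, hroot, hnrg⟩, _⟩ := hQT F p ⟨hF, hcard⟩ hpi hQ
    have hGf : IsOutForest a (insert (p, i) F) := forest_insert hF hap hroot hnrg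
    have hpar : par (insert (p, i) F) i = p := par_eq hGf (Finset.mem_insert_self _ _)
    simp only [hpar]
    rw [Finset.erase_insert (hroot p)]
  · -- right inverse
    intro G hG
    rw [Finset.mem_filter, mem_forestsK] at hG
    obtain ⟨⟨hG1, hG2⟩, hT⟩ := hG
    obtain ⟨hex, _⟩ := hTQ G ⟨hG1, hG2⟩ hT
    exact Finset.insert_erase (par_mem hex)
  · -- weights
    rintro ⟨F, p⟩ hx
    rw [Finset.mem_filter, mem_pairsP] at hx
    obtain ⟨⟨⟨hF, hcard⟩, hpi⟩, hQ⟩ := hx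
    obtain ⟨⟨hap, hroot, hnrg⟩, _⟩ := hQT F p ⟨hF, hcard⟩ hpi hQ
    rw [wtF, forestWeight, forestWeight, Finset.prod_insert (hroot p)]

theorem erase_parent_root {a : Matrix (Fin n) (Fin n) ℝ} {F : Finset (Fin n × Fin n)}
    (hF : IsOutForest a F) {q i : Fin n} (hq : (q, i) ∈ F) :
    ∀ u, (u, i) ∉ F.erase (q, i) := by
  intro u hu
  rcases Finset.mem_erase.mp hu with ⟨hne, hmem⟩
  exact hne (by rw [uniq hF hmem hq])

open Classical in
/-- The parent-swap weight-preserving bijection. -/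
theorem swap_bij (a : Matrix (Fin n) (Fin n) ℝ) (k : ℕ) {i j : Fin n} (hij : i ≠ j) :
    ∑ x ∈ (pairsP a k i).filter
        (fun x => (InTreeRootedAt x.1 j i ∧ 0 < a i x.2) ∧ ¬ Rg x.1 i x.2), wtF a i x
      = ∑ x ∈ (pairsP a k i).filter
        (fun x => ((InTreeRootedAt x.1 j x.2 ∧ 0 < a i x.2) ∧ ¬ (∀ u, (u, i) ∉ x.1)) ∧
          ¬ Rg x.1 i x.2), wtF a i x := by
  have main : ∀ F : Finset (Fin n × Fin n), ∀ p : Fin n, IsOutForest a F → F.card = k →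
      p ≠ i → 0 < a i p → (∀ u, (u, j) ∉ F) → (∃ u, (u, i) ∈ F) → ¬ Rg F i p →
      IsOutForest a (insert (p, i) (F.erase (par F i, i))) ∧
      (insert (p, i) (F.erase (par F i, i))).card = k ∧
      par F i ≠ i ∧ 0 < a i (par F i) ∧
      (∀ u, (u, j) ∉ insert (p, i) (F.erase (par F i, i))) ∧
      ¬ Rg (insert (p, i) (F.erase (par F i, i))) i (par F i) ∧
      (¬ ∀ u, (u, i) ∉ insert (p, i) (F.erase (par F i, i))) ∧
      par (insert (p, i) (F.erase (par F i, i))) i = p ∧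
      insert (par F i, i) ((insert (p, i) (F.erase (par F i, i))).erase (p, i)) = F ∧
      wtF a i (F, p) = wtF a i (insert (p, i) (F.erase (par F i, i)), par F i) ∧
      (Rg F j i → Rg (insert (p, i) (F.erase (par F i, i))) j (par F i)) ∧
      (Rg F j p → Rg (insert (p, i) (F.erase (par F i, i))) j i) := by
    intro F p hF hcard hpi hap hrootj hex hnrg
    set q := par F i with hqdef
    have hq : (q, i) ∈ F := par_mem hex
    have haq : 0 < a i q := hF.1 _ hq
    have hqi : q ≠ i := fun h => not_selfloop (acyc_of_forest hF) i (by rwa [h] at hq)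
    have hrootE : ∀ u, (u, i) ∉ F.erase (q, i) := erase_parent_root hF hq
    have hEf : IsOutForest a (F.erase (q, i)) := forest_of_subset hF (Finset.erase_subset _ _)
    have hnrgE : ¬ Rg (F.erase (q, i)) i p :=
      fun h => hnrg (rg_mono (Finset.erase_subset _ _) h)
    have hGf : IsOutForest a (insert (p, i) (F.erase (q, i))) :=
      forest_insert hEf hap hrootE hnrgE
    have hpiE : (p, i) ∉ F.erase (q, i) := hrootE p
    have hcardG : (insert (p, i) (F.erase (q, i))).card = k := by
      rw [Finset.card_insert_of_notMem hpiE]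
      have := Finset.card_erase_add_one hq
      omega
    have hrootjG : ∀ u, (u, j) ∉ insert (p, i) (F.erase (q, i)) := by
      intro u hu
      rcases Finset.mem_insert.mp hu with he | he
      · exact hij (congrArg Prod.snd he).symm
      · exact hrootj u (Finset.mem_erase.mp he).2
    have hnotRgGiq : ¬ Rg (insert (p, i) (F.erase (q, i))) i q := by
      intro h
      rcases rg_insert_decomp h with h1 | h1
      · exact no_cycle_arc hF hq (rg_mono (Finset.erase_subset _ _) h1)
      · exact hnrgE h1.1
    have hparG : par (insert (p, i) (F.erase (q, i))) i = p :=
      par_eq hGf (Finset.mem_insert_self _ _)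
    have hback : insert (q, i) ((insert (p, i) (F.erase (q, i))).erase (p, i)) = F := by
      rw [Finset.erase_insert hpiE, Finset.insert_erase hq]
    have hwt : wtF a i (F, p) = wtF a i (insert (p, i) (F.erase (q, i)), q) := by
      simp only [wtF, forestWeight]
      rw [Finset.prod_insert hpiE]
      have := Finset.mul_prod_erase F (fun e => a e.2 e.1) hq
      dsimp at this ⊢
      rw [← this]
      ring
    refine ⟨hGf, hcardG, hqi, haq, hrootjG, hnotRgGiq,
      fun h => h p (Finset.mem_insert_self _ _), hparG, hback, hwt, ?_, ?_⟩
    · intro hji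
      have hjq : Rg F j q := rg_to_parent hF hji hij hq
      have : Rg (F.erase (q, i)) j q := by
        rcases rg_erase_decomp (q := q) (i := i) hjq with h1 | h1
        · exact h1
        · exact absurd (rg_mono (Finset.erase_subset _ _) h1)
            (fun h => no_cycle_arc hF hq h)
      exact rg_mono (Finset.subset_insert _ _) this
    · intro hjp
      have : Rg (F.erase (q, i)) j p := by
        rcases rg_erase_decomp (q := q) (i := i) hjp with h1 | h1
        · exact h1
        · exact absurd h1 hnrgE
      exact (rg_mono (Finset.subset_insert _ _) this).tail (Finset.mem_insert_self _ _)
  refine Finset.sum_nbij' (fun x => (insert (x.2, i) (x.1.erase (par x.1 i, i)), par x.1 i))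
    (fun x => (insert (x.2, i) (x.1.erase (par x.1 i, i)), par x.1 i)) ?_ ?_ ?_ ?_ ?_
  · -- forward membership
    rintro ⟨F, p⟩ hx
    rw [Finset.mem_filter, mem_pairsP] at hx
    obtain ⟨⟨⟨hF, hcard⟩, hpi⟩, ⟨hIT, hap⟩, hnrg⟩ := hx
    obtain ⟨hrootj, hji⟩ := inTree_iff.mp hIT
    have hex : ∃ u, (u, i) ∈ F := by
      rcases rg_cases_tail hji with h' | ⟨w, _, hw⟩
      · exact absurd h' hij
      · exact ⟨w, hw⟩
    obtain ⟨hGf, hcardG, hqi, haq, hrootjG, hnotRgGiq, hnR0, _, _, _, hr1, _⟩ :=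
      main F p hF hcard hpi hap hrootj hex hnrg
    rw [Finset.mem_filter, mem_pairsP]
    dsimp only
    exact ⟨⟨⟨hGf, hcardG⟩, hqi⟩, ⟨⟨inTree_iff.mpr ⟨hrootjG, hr1 hji⟩, haq⟩, hnR0⟩, hnotRgGiq⟩
  · -- backward membership
    rintro ⟨F, p⟩ hx
    rw [Finset.mem_filter, mem_pairsP] at hx
    obtain ⟨⟨⟨hF, hcard⟩, hpi⟩, ⟨⟨hIT, hap⟩, hnR0⟩, hnrg⟩ := hx
    obtain ⟨hrootj, hjp⟩ := inTree_iff.mp hIT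
    have hex : ∃ u, (u, i) ∈ F := by
      by_contra h
      push_neg at h
      exact hnR0 h
    obtain ⟨hGf, hcardG, hqi, haq, hrootjG, hnotRgGiq, _, _, _, _, _, hr2⟩ :=
      main F p hF hcard hpi hap hrootj hex hnrg
    rw [Finset.mem_filter, mem_pairsP]
    dsimp only
    exact ⟨⟨⟨hGf, hcardG⟩, hqi⟩, ⟨inTree_iff.mpr ⟨hrootjG, hr2 hjp⟩, haq⟩, hnotRgGiq⟩
  · -- left inverse
    rintro ⟨F, p⟩ hx
    rw [Finset.mem_filter, mem_pairsP] at hx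
    obtain ⟨⟨⟨hF, hcard⟩, hpi⟩, ⟨hIT, hap⟩, hnrg⟩ := hx
    obtain ⟨hrootj, hji⟩ := inTree_iff.mp hIT
    have hex : ∃ u, (u, i) ∈ F := by
      rcases rg_cases_tail hji with h' | ⟨w, _, hw⟩
      · exact absurd h' hij
      · exact ⟨w, hw⟩
    obtain ⟨_, _, _, _, _, _, _, hpar, hback, _, _, _⟩ :=
      main F p hF hcard hpi hap hrootj hex hnrg
    dsimp only
    rw [hpar, hback]
  · -- right inverse
    rintro ⟨F, p⟩ hx
    rw [Finset.mem_filter, mem_pairsP] at hx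
    obtain ⟨⟨⟨hF, hcard⟩, hpi⟩, ⟨⟨hIT, hap⟩, hnR0⟩, hnrg⟩ := hx
    obtain ⟨hrootj, hjp⟩ := inTree_iff.mp hIT
    have hex : ∃ u, (u, i) ∈ F := by
      by_contra h
      push_neg at h
      exact hnR0 h
    obtain ⟨_, _, _, _, _, _, _, hpar, hback, _, _, _⟩ :=
      main F p hF hcard hpi hap hrootj hex hnrg
    dsimp only
    rw [hpar, hback]
  · -- weights
    rintro ⟨F, p⟩ hx
    rw [Finset.mem_filter, mem_pairsP] at hx
    obtain ⟨⟨⟨hF, hcard⟩, hpi⟩, ⟨hIT, hap⟩, hnrg⟩ := hx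
    obtain ⟨hrootj, hji⟩ := inTree_iff.mp hIT
    have hex : ∃ u, (u, i) ∈ F := by
      rcases rg_cases_tail hji with h' | ⟨w, _, hw⟩
      · exact absurd h' hij
      · exact ⟨w, hw⟩
    obtain ⟨_, _, _, _, _, _, _, _, _, hwt, _, _⟩ :=
      main F p hF hcard hpi hap hrootj hex hnrg
    exact hwt

open Classical in
/-- The key combinatorial identity (one entry of the forest recursion). -/
theorem key_identity (a : Matrix (Fin n) (Fin n) ℝ) (hnn : ∀ i j, 0 ≤ a i j) (k : ℕ)
    (i j : Fin n) :
    Jmat a (k + 1) i j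
        + ∑ x ∈ (pairsP a k i).filter (fun x => InTreeRootedAt x.1 j i), wtF a i x
      = (if i = j then sigmaK a (k + 1) else 0)
        + ∑ x ∈ (pairsP a k i).filter (fun x => InTreeRootedAt x.1 j x.2), wtF a i x := by
  classical
  have hs : ∀ pred : Finset (Fin n × Fin n) × Fin n → Prop,
      ∑ x ∈ (pairsP a k i).filter pred, wtF a i x
        = ∑ x ∈ (pairsP a k i).filter (fun x => pred x ∧ 0 < a i x.2), wtF a i x := by
    intro pred
    rw [← Finset.filter_filter]
    refine (Finset.sum_filter_of_ne ?_).symm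
    intro x _ hne
    refine lt_of_le_of_ne (hnn i x.2) fun h0 => hne ?_
    rw [wtF, ← h0, zero_mul]
  rw [hs (fun x => InTreeRootedAt x.1 j i), hs (fun x => InTreeRootedAt x.1 j x.2)]
  by_cases hij : i = j
  · subst hij
    rw [if_pos rfl]
    have hsplit := Finset.sum_filter_add_sum_filter_not
      ((pairsP a k i).filter (fun x => InTreeRootedAt x.1 i i ∧ 0 < a i x.2))
      (fun x => InTreeRootedAt x.1 i x.2 ∧ 0 < a i x.2) (wtF a i)
    rw [Finset.filter_filter, Finset.filter_filter] at hsplit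
    have hQBA : (pairsP a k i).filter
          (fun x => (InTreeRootedAt x.1 i i ∧ 0 < a i x.2) ∧
            (InTreeRootedAt x.1 i x.2 ∧ 0 < a i x.2))
        = (pairsP a k i).filter (fun x => InTreeRootedAt x.1 i x.2 ∧ 0 < a i x.2) := by
      apply Finset.filter_congr
      intro x _
      constructor
      · exact fun h => h.2
      · intro h
        exact ⟨⟨inTree_iff.mpr ⟨(inTree_iff.mp h.1).1, Relation.ReflTransGen.refl⟩, h.2⟩, h⟩
    rw [hQBA] at hsplit
    have hsigma : sigmaK a (k + 1) = Jmat a (k + 1) i i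
        + ∑ G ∈ (forestsK a (k + 1)).filter (fun G => ¬ InTreeRootedAt G i i),
            forestWeight a G := by
      have h0 := Finset.sum_filter_add_sum_filter_not (forestsK a (k + 1))
        (fun G => InTreeRootedAt G i i) (forestWeight a)
      rw [sigmaK, ← h0]
      rfl
    have hbij : ∑ x ∈ (pairsP a k i).filter
          (fun x => (InTreeRootedAt x.1 i i ∧ 0 < a i x.2) ∧
            ¬ (InTreeRootedAt x.1 i x.2 ∧ 0 < a i x.2)), wtF a i x
        = ∑ G ∈ (forestsK a (k + 1)).filter (fun G => ¬ InTreeRootedAt G i i),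
            forestWeight a G := by
      refine sum_pairs_eq_sum_forests a k i _ _ ?_ ?_
      · rintro F p ⟨hF, hcard⟩ hpi ⟨⟨hIT, hap⟩, hnQB⟩
        obtain ⟨hrootI, -⟩ := inTree_iff.mp hIT
        have hnrg : ¬ Rg F i p := fun hrg => hnQB ⟨inTree_iff.mpr ⟨hrootI, hrg⟩, hap⟩
        refine ⟨⟨hap, hrootI, hnrg⟩, ?_⟩
        exact fun hc => (inTree_iff.mp hc).1 p (Finset.mem_insert_self _ _)
      · rintro G ⟨hG1, hG2⟩ hT
        have hex : ∃ u, (u, i) ∈ G := by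
          by_contra h
          push_neg at h
          exact hT (inTree_iff.mpr ⟨h, Relation.ReflTransGen.refl⟩)
        have hq := par_mem hex
        refine ⟨hex, ⟨inTree_iff.mpr ⟨erase_parent_root hG1 hq, Relation.ReflTransGen.refl⟩,
          hG1.1 _ hq⟩, ?_⟩
        rintro ⟨hITq, -⟩
        exact no_cycle_arc hG1 hq
          (rg_mono (Finset.erase_subset _ _) (inTree_iff.mp hITq).2)
    rw [hsigma, ← hsplit, ← hbij]
    ring
  · rw [if_neg hij, zero_add]
    have h1 := Finset.sum_filter_add_sum_filter_not
      ((pairsP a k i).filter (fun x => InTreeRootedAt x.1 j x.2 ∧ 0 < a i x.2))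
      (fun x => ∀ u, (u, i) ∉ x.1) (wtF a i)
    rw [Finset.filter_filter, Finset.filter_filter] at h1
    have h2 := Finset.sum_filter_add_sum_filter_not
      ((pairsP a k i).filter
        (fun x => (InTreeRootedAt x.1 j x.2 ∧ 0 < a i x.2) ∧ ¬ ∀ u, (u, i) ∉ x.1))
      (fun x => Rg x.1 i x.2) (wtF a i)
    rw [Finset.filter_filter, Finset.filter_filter] at h2
    have h3 := Finset.sum_filter_add_sum_filter_not
      ((pairsP a k i).filter (fun x => InTreeRootedAt x.1 j i ∧ 0 < a i x.2))
      (fun x => Rg x.1 i x.2) (wtF a i)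
    rw [Finset.filter_filter, Finset.filter_filter] at h3
    have heq : (pairsP a k i).filter
          (fun x => ((InTreeRootedAt x.1 j x.2 ∧ 0 < a i x.2) ∧ ¬ ∀ u, (u, i) ∉ x.1) ∧
            Rg x.1 i x.2)
        = (pairsP a k i).filter
          (fun x => (InTreeRootedAt x.1 j i ∧ 0 < a i x.2) ∧ Rg x.1 i x.2) := by
      apply Finset.filter_congr
      intro x hx
      rw [mem_pairsP] at hx
      obtain ⟨⟨hF, -⟩, -⟩ := hx
      constructor
      · rintro ⟨⟨⟨hIT, hap⟩, -⟩, hip⟩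
        obtain ⟨hrootj, hjp⟩ := inTree_iff.mp hIT
        have : Rg x.1 j i := by
          rcases rg_comparable hF hip hjp with h' | h'
          · rcases rg_cases_tail h' with h'' | ⟨w, _, hw⟩
            · exact absurd h''.symm hij
            · exact absurd hw (hrootj w)
          · exact h'
        exact ⟨⟨inTree_iff.mpr ⟨hrootj, this⟩, hap⟩, hip⟩
      · rintro ⟨⟨hIT, hap⟩, hip⟩
        obtain ⟨hrootj, hji⟩ := inTree_iff.mp hIT
        refine ⟨⟨⟨inTree_iff.mpr ⟨hrootj, hji.trans hip⟩, hap⟩, ?_⟩, hip⟩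
        intro hall
        rcases rg_cases_tail hji with h'' | ⟨w, _, hw⟩
        · exact hij h''
        · exact hall w hw
    have hswap := swap_bij a k hij
    have hins : ∑ x ∈ (pairsP a k i).filter
          (fun x => (InTreeRootedAt x.1 j x.2 ∧ 0 < a i x.2) ∧ ∀ u, (u, i) ∉ x.1), wtF a i x
        = Jmat a (k + 1) i j := by
      refine (sum_pairs_eq_sum_forests a k i _ (fun G => InTreeRootedAt G j i) ?_ ?_)
      · rintro F p ⟨hF, hcard⟩ hpi ⟨⟨hIT, hap⟩, hrootI⟩
        obtain ⟨hrootj, hjp⟩ := inTree_iff.mp hIT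
        have hnrg : ¬ Rg F i p := fun hrg => hij (root_unique hF hrootI hrootj hrg hjp)
        refine ⟨⟨hap, hrootI, hnrg⟩, inTree_iff.mpr ⟨?_, ?_⟩⟩
        · intro u hu
          rcases Finset.mem_insert.mp hu with he | he
          · exact hij (congrArg Prod.snd he).symm
          · exact hrootj u he
        · exact (rg_mono (Finset.subset_insert _ _) hjp).tail (Finset.mem_insert_self _ _)
      · rintro G ⟨hG1, hG2⟩ hT
        obtain ⟨hrj, hrgji⟩ := inTree_iff.mp hT
        have hex : ∃ u, (u, i) ∈ G := by
          rcases rg_cases_tail hrgji with h' | ⟨w, _, hw⟩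
          · exact absurd h' hij
          · exact ⟨w, hw⟩
        have hq := par_mem hex
        refine ⟨hex, ⟨inTree_iff.mpr ⟨?_, ?_⟩, hG1.1 _ hq⟩, erase_parent_root hG1 hq⟩
        · exact fun u hu => hrj u ((Finset.erase_subset _ _) hu)
        · have hGq : Rg G j (par G i) := rg_to_parent hG1 hrgji hij hq
          rcases rg_erase_decomp (q := par G i) (i := i) hGq with h' | h'
          · exact h'
          · exact absurd (rg_mono (Finset.erase_subset _ _) h')
              (fun hh => no_cycle_arc hG1 hq hh)
    rw [heq] at h2
    linarith [h1, h2, h3, hswap, hins]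

open Classical in
theorem jmat_entry (a : Matrix (Fin n) (Fin n) ℝ) (k : ℕ) (i j : Fin n) :
    Jmat a k i j
      = ∑ F ∈ (forestsK a k).filter (fun F => InTreeRootedAt F j i), forestWeight a F := rfl

/-- The matrix forest recursion. -/
theorem forest_recursion (a : Matrix (Fin n) (Fin n) ℝ) (hnn : ∀ i j, 0 ≤ a i j) (k : ℕ) :
    Jmat a (k + 1) + kirchhoff a * Jmat a k = sigmaK a (k + 1) • (1 : Matrix (Fin n) (Fin n) ℝ) := by
  classical
  ext i j
  rw [Matrix.add_apply, Matrix.smul_apply, Matrix.one_apply, Matrix.mul_apply, smul_eq_mul,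
    mul_ite, mul_one, mul_zero]
  have hA : ∑ x ∈ (pairsP a k i).filter (fun x => InTreeRootedAt x.1 j i), wtF a i x
      = (∑ p ∈ Finset.univ.erase i, a i p) * Jmat a k i j := by
    rw [pairsP]
    simp only [Finset.sum_filter, Finset.sum_product]
    rw [jmat_entry, Finset.sum_filter, Finset.mul_sum]
    refine Finset.sum_congr rfl fun F _ => ?_
    rw [mul_ite, mul_zero]
    by_cases hIT : InTreeRootedAt F j i
    · simp only [if_pos hIT, wtF]
      rw [Finset.sum_mul]
    · simp only [if_neg hIT, Finset.sum_const_zero]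
  have hB : ∑ x ∈ (pairsP a k i).filter (fun x => InTreeRootedAt x.1 j x.2), wtF a i x
      = ∑ p ∈ Finset.univ.erase i, a i p * Jmat a k p j := by
    rw [pairsP]
    simp only [Finset.sum_filter, Finset.sum_product]
    rw [Finset.sum_comm]
    refine Finset.sum_congr rfl fun p _ => ?_
    rw [jmat_entry, Finset.sum_filter, Finset.mul_sum]
    refine Finset.sum_congr rfl fun F _ => ?_
    rw [mul_ite, mul_zero]
    by_cases hIT : InTreeRootedAt F j p
    · rw [if_pos hIT, if_pos hIT]
      rfl
    · rw [if_neg hIT, if_neg hIT]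
  have hmul : ∑ p, kirchhoff a i p * Jmat a k p j
      = (∑ x ∈ (pairsP a k i).filter (fun x => InTreeRootedAt x.1 j i), wtF a i x)
        - ∑ x ∈ (pairsP a k i).filter (fun x => InTreeRootedAt x.1 j x.2), wtF a i x := by
    rw [hA, hB, ← Finset.add_sum_erase Finset.univ _ (Finset.mem_univ i)]
    have hdiag : kirchhoff a i i = ∑ p ∈ Finset.univ.erase i, a i p := by
      rw [kirchhoff, Matrix.of_apply, if_pos rfl]
    have hoff : ∑ p ∈ Finset.univ.erase i, kirchhoff a i p * Jmat a k p j
        = ∑ p ∈ Finset.univ.erase i, -(a i p * Jmat a k p j) := by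
      refine Finset.sum_congr rfl fun p hp => ?_
      have hpi : ¬ (i = p) := fun h => (Finset.mem_erase.mp hp).1 h.symm
      rw [kirchhoff, Matrix.of_apply, if_neg hpi, neg_mul]
    rw [hdiag, hoff, Finset.sum_neg_distrib]
    ring
  have hkey := key_identity a hnn k i j
  rw [hmul]
  linarith [hkey]

theorem Jmat_succ_max (a : Matrix (Fin n) (Fin n) ℝ) :
    Jmat a (maxForestSize a + 1) = 0 := by
  classical
  ext i j
  rw [jmat_entry, forestsK_succ_max, Finset.filter_empty, Finset.sum_empty, Matrix.zero_apply]

theorem sigmaK_succ_max (a : Matrix (Fin n) (Fin n) ℝ) :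
    sigmaK a (maxForestSize a + 1) = 0 := by
  rw [sigmaK, forestsK_succ_max, Finset.sum_empty]

theorem kirchhoff_mul_Jmax (a : Matrix (Fin n) (Fin n) ℝ) (hnn : ∀ i j, 0 ≤ a i j) :
    kirchhoff a * Jmat a (maxForestSize a) = 0 := by
  have h := forest_recursion a hnn (maxForestSize a)
  rw [Jmat_succ_max, sigmaK_succ_max, zero_add, zero_smul] at h
  exact h

theorem barJ_eq_smul (a : Matrix (Fin n) (Fin n) ℝ) :
    barJ a = (sigmaK a (maxForestSize a))⁻¹ • Jmat a (maxForestSize a) := by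
  classical
  ext i j
  rw [barJ, Matrix.of_apply, Matrix.smul_apply, smul_eq_mul, jmat_entry, maxForests_eq,
    ← sigmaK, div_eq_inv_mul]

theorem kirchhoff_mul_barJ (a : Matrix (Fin n) (Fin n) ℝ) (hnn : ∀ i j, 0 ≤ a i j) :
    kirchhoff a * barJ a = 0 := by
  rw [barJ_eq_smul, Matrix.mul_smul, kirchhoff_mul_Jmax a hnn, smul_zero]

theorem exists_C (a : Matrix (Fin n) (Fin n) ℝ) (hnn : ∀ i j, 0 ≤ a i j) :
    ∃ C : Matrix (Fin n) (Fin n) ℝ, (1 : Matrix (Fin n) (Fin n) ℝ) - barJ a = kirchhoff a * C := by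
  rcases hr : maxForestSize a with _ | k
  · refine ⟨0, ?_⟩
    rw [Matrix.mul_zero, barJ_eq_smul, hr, sigmaK_zero, Jmat_zero, inv_one, one_smul, sub_self]
  · refine ⟨(sigmaK a (k + 1))⁻¹ • Jmat a k, ?_⟩
    have hrec := forest_recursion a hnn k
    have hσ : sigmaK a (k + 1) ≠ 0 := by
      have := sigma_max_pos a
      rw [hr] at this
      exact ne_of_gt this
    rw [barJ_eq_smul, hr, Matrix.mul_smul]
    have h2 : kirchhoff a * Jmat a k = sigmaK a (k + 1) • 1 - Jmat a (k + 1) :=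
      eq_sub_of_add_eq' hrec
    rw [h2, smul_sub, smul_smul, inv_mul_cancel₀ hσ, one_smul]

theorem kirchhoff_row_sum (a : Matrix (Fin n) (Fin n) ℝ) (i : Fin n) :
    ∑ j, kirchhoff a i j = 0 := by
  classical
  rw [← Finset.add_sum_erase Finset.univ (fun j => kirchhoff a i j) (Finset.mem_univ i)]
  have h1 : kirchhoff a i i = ∑ p ∈ Finset.univ.erase i, a i p := by
    rw [kirchhoff, Matrix.of_apply, if_pos rfl]
  have h2 : ∑ j ∈ Finset.univ.erase i, kirchhoff a i j
      = -∑ j ∈ Finset.univ.erase i, a i j := by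
    rw [← Finset.sum_neg_distrib]
    refine Finset.sum_congr rfl fun p hp => ?_
    rw [kirchhoff, Matrix.of_apply, if_neg (fun h => (Finset.mem_erase.mp hp).1 h.symm)]
  rw [h1, h2]
  ring

end MCTT

/-- Markov chain tree theorem: the Cesàro limit `P^∞ = lim (1/m) ∑_{i=1}^m P^i`
of the stochastic matrix `P = I − εL` exists and equals the normalized matrix
of maximum out-forests `J̄`. -/
theorem cesaro_limit_eq_barJ {n : ℕ} (hn : 0 < n) (a : Matrix (Fin n) (Fin n) ℝ)
    (hnn : ∀ i j, 0 ≤ a i j) (ε : ℝ) (hε : 0 < ε)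
    (hε' : ε * (Finset.univ.sup' (Finset.univ_nonempty_iff.mpr ⟨⟨0, hn⟩⟩)
      (fun i => ∑ j ∈ Finset.univ.erase i, a i j)) ≤ 1) :
    Filter.Tendsto
      (fun m : ℕ => (m : ℝ)⁻¹ •
        ∑ i ∈ Finset.range m, ((1 : Matrix (Fin n) (Fin n) ℝ) - ε • kirchhoff a) ^ (i + 1))
      Filter.atTop (nhds (barJ a)) := by
  classical
  set P : Matrix (Fin n) (Fin n) ℝ := (1 : Matrix (Fin n) (Fin n) ℝ) - ε • kirchhoff a with hPdef
  -- stochasticity of P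
  have hProw : ∀ i, ∑ j, P i j = 1 := by
    intro i
    simp only [hPdef, Matrix.sub_apply, Matrix.smul_apply, smul_eq_mul]
    rw [Finset.sum_sub_distrib, ← Finset.mul_sum, MCTT.kirchhoff_row_sum, mul_zero, sub_zero]
    simp [Matrix.one_apply]
  have hPnn : ∀ i j, 0 ≤ P i j := by
    intro i j
    by_cases h : i = j
    · subst h
      have h1 : (∑ p ∈ Finset.univ.erase i, a i p)
          ≤ Finset.univ.sup' (Finset.univ_nonempty_iff.mpr ⟨⟨0, hn⟩⟩)
            (fun i => ∑ j ∈ Finset.univ.erase i, a i j) :=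
        Finset.le_sup' (fun i => ∑ j ∈ Finset.univ.erase i, a i j) (Finset.mem_univ i)
      have h2 : ε * (∑ p ∈ Finset.univ.erase i, a i p)
          ≤ ε * Finset.univ.sup' (Finset.univ_nonempty_iff.mpr ⟨⟨0, hn⟩⟩)
            (fun i => ∑ j ∈ Finset.univ.erase i, a i j) :=
        mul_le_mul_of_nonneg_left h1 hε.le
      simp only [hPdef, Matrix.sub_apply, Matrix.smul_apply, smul_eq_mul,
        Matrix.one_apply_eq, kirchhoff, Matrix.of_apply, eq_self_iff_true, if_true]
      linarith
    · have := mul_nonneg hε.le (hnn i j)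
      simp only [hPdef, Matrix.sub_apply, Matrix.smul_apply, smul_eq_mul,
        Matrix.one_apply_ne h, kirchhoff, Matrix.of_apply, if_neg h]
      linarith
  have hpow : ∀ t : ℕ, (∀ i j, 0 ≤ (P ^ t) i j) ∧ (∀ i, ∑ j, (P ^ t) i j = 1) := by
    intro t
    induction t with
    | zero =>
      constructor
      · intro i j
        rw [pow_zero, Matrix.one_apply]
        split <;> norm_num
      · intro i
        rw [pow_zero]
        simp [Matrix.one_apply]
    | succ t ih =>
      constructor
      · intro i j
        rw [pow_succ, Matrix.mul_apply]
        exact Finset.sum_nonneg fun p _ => mul_nonneg (ih.1 i p) (hPnn p j)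
      · intro i
        rw [pow_succ]
        simp only [Matrix.mul_apply]
        rw [Finset.sum_comm]
        have : ∀ p ∈ Finset.univ, ∑ j, (P ^ t) i p * P p j = (P ^ t) i p := by
          intro p _
          rw [← Finset.mul_sum, hProw, mul_one]
        rw [Finset.sum_congr rfl this]
        exact ih.2 i
  have hPle1 : ∀ (t : ℕ) (i p : Fin n), (P ^ t) i p ≤ 1 := by
    intro t i p
    have h := Finset.single_le_sum (f := fun j => (P ^ t) i j)
      (fun j _ => (hpow t).1 i j) (Finset.mem_univ p)
    rw [(hpow t).2 i] at h
    exact h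
  obtain ⟨C, hC⟩ := MCTT.exists_C a hnn
  have hLJ := MCTT.kirchhoff_mul_barJ a hnn
  have hPJ : P * barJ a = barJ a := by
    rw [hPdef, Matrix.sub_mul, Matrix.one_mul, Matrix.smul_mul, hLJ, smul_zero, sub_zero]
  have hPtJ : ∀ t : ℕ, P ^ t * barJ a = barJ a := by
    intro t
    induction t with
    | zero => rw [pow_zero, Matrix.one_mul]
    | succ t ih => rw [pow_succ, Matrix.mul_assoc, hPJ, ih]
  have hDid : ∀ m : ℕ, (∑ t ∈ Finset.range m, P ^ (t + 1)) - (m : ℝ) • barJ a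
      = ε⁻¹ • ((P - P ^ (m + 1)) * C) := by
    intro m
    have h1 : (∑ t ∈ Finset.range m, P ^ (t + 1)) * barJ a = (m : ℝ) • barJ a := by
      rw [Finset.sum_mul, Finset.sum_congr rfl (fun t _ => hPtJ (t + 1)), Finset.sum_const,
        Finset.card_range]
      exact (Nat.cast_smul_eq_nsmul ℝ m _).symm
    have h2 : (∑ t ∈ Finset.range m, P ^ (t + 1)) * ((1 : Matrix (Fin n) (Fin n) ℝ) - P)
        = P - P ^ (m + 1) := by
      rw [Finset.sum_mul]
      have he : ∀ t ∈ Finset.range m, P ^ (t + 1) * ((1 : Matrix (Fin n) (Fin n) ℝ) - P)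
          = P ^ (t + 1) - P ^ (t + 1 + 1) := by
        intro t _
        rw [Matrix.mul_sub, Matrix.mul_one, ← pow_succ]
      rw [Finset.sum_congr rfl he, Finset.sum_range_sub' (fun t => P ^ (t + 1)) m,
        zero_add, pow_one]
    have h3 : (1 : Matrix (Fin n) (Fin n) ℝ) - P = ε • kirchhoff a := by
      rw [hPdef, sub_sub_cancel]
    have hK : ε⁻¹ • ((1 : Matrix (Fin n) (Fin n) ℝ) - P) = kirchhoff a := by
      rw [h3, inv_smul_smul₀ (ne_of_gt hε)]
    calc (∑ t ∈ Finset.range m, P ^ (t + 1)) - (m : ℝ) • barJ a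
        = (∑ t ∈ Finset.range m, P ^ (t + 1)) * ((1 : Matrix (Fin n) (Fin n) ℝ) - barJ a) := by
          rw [Matrix.mul_sub, Matrix.mul_one, h1]
      _ = (∑ t ∈ Finset.range m, P ^ (t + 1)) * (kirchhoff a * C) := by rw [hC]
      _ = ε⁻¹ • ((P - P ^ (m + 1)) * C) := by
          rw [← hK, Matrix.smul_mul, Matrix.mul_smul, ← Matrix.mul_assoc, h2]
  refine tendsto_pi_nhds.mpr ?_
  intro i
  rw [tendsto_pi_nhds]
  intro j
  have hrep : ∀ m : ℕ, (((m : ℝ)⁻¹ • ∑ t ∈ Finset.range m, P ^ (t + 1)) : Matrix (Fin n) (Fin n) ℝ) i j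
      = (m : ℝ)⁻¹ * ((m : ℝ) * barJ a i j)
        + (m : ℝ)⁻¹ * (ε⁻¹ * (((P - P ^ (m + 1)) * C) i j)) := by
    intro m
    have h' := congrFun (congrFun (hDid m) i) j
    simp only [Matrix.sub_apply, Matrix.smul_apply, smul_eq_mul] at h'
    have hD : (∑ t ∈ Finset.range m, P ^ (t + 1)) i j
        = (m : ℝ) * barJ a i j + ε⁻¹ * (((P - P ^ (m + 1)) * C) i j) := by linarith
    rw [Matrix.smul_apply, smul_eq_mul, hD, mul_add]
  set K : ℝ := ∑ p, |C p j| with hKdef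
  have hKnn : 0 ≤ K := Finset.sum_nonneg fun p _ => abs_nonneg _
  have hb : ∀ t : ℕ, |(P ^ t * C) i j| ≤ K := by
    intro t
    rw [Matrix.mul_apply]
    refine (Finset.abs_sum_le_sum_abs _ _).trans ?_
    refine Finset.sum_le_sum fun p _ => ?_
    rw [abs_mul, abs_of_nonneg ((hpow t).1 i p)]
    exact mul_le_of_le_one_left (abs_nonneg _) (hPle1 t i p)
  have hE : ∀ m : ℕ, |(((P - P ^ (m + 1)) * C) i j)| ≤ 2 * K := by
    intro m
    rw [Matrix.sub_mul, Matrix.sub_apply]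
    have h1 : |(P * C) i j| ≤ K := by
      have := hb 1
      rwa [pow_one] at this
    have h2 := hb (m + 1)
    calc |(P * C) i j - (P ^ (m + 1) * C) i j|
        ≤ |(P * C) i j| + |(P ^ (m + 1) * C) i j| := abs_sub _ _
      _ ≤ 2 * K := by linarith
  have t1 : Filter.Tendsto (fun m : ℕ => (m : ℝ)⁻¹ * ((m : ℝ) * barJ a i j))
      Filter.atTop (nhds (barJ a i j)) := by
    refine Filter.Tendsto.congr' ?_ tendsto_const_nhds
    filter_upwards [Filter.eventually_ge_atTop 1] with m hm
    have hm0 : (m : ℝ) ≠ 0 := Nat.cast_ne_zero.mpr (by omega)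
    rw [inv_mul_cancel_left₀ hm0]
  have t2 : Filter.Tendsto
      (fun m : ℕ => (m : ℝ)⁻¹ * (ε⁻¹ * (((P - P ^ (m + 1)) * C) i j)))
      Filter.atTop (nhds 0) := by
    have hg : Filter.Tendsto (fun m : ℕ => (ε⁻¹ * (2 * K)) / (m : ℝ))
        Filter.atTop (nhds 0) := tendsto_const_div_atTop_nhds_zero_nat _
    refine squeeze_zero_norm (fun m => ?_) hg
    have hεinv : (0 : ℝ) ≤ ε⁻¹ := (inv_pos.mpr hε).le
    have hminv : (0 : ℝ) ≤ (m : ℝ)⁻¹ := by positivity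
    rw [Real.norm_eq_abs, abs_mul, abs_mul, abs_of_nonneg hminv, abs_of_nonneg hεinv,
      div_eq_mul_inv]
    calc (m : ℝ)⁻¹ * (ε⁻¹ * |(((P - P ^ (m + 1)) * C) i j)|)
        ≤ (m : ℝ)⁻¹ * (ε⁻¹ * (2 * K)) := by
          refine mul_le_mul_of_nonneg_left ?_ hminv
          exact mul_le_mul_of_nonneg_left (hE m) hεinv
      _ = ε⁻¹ * (2 * K) * (m : ℝ)⁻¹ := by ring
  have := t1.add t2
  rw [add_zero] at this
  exact this.congr fun m => (hrep m).symm
end
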